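/- arXiv:2504.13559 — 4 statements merged into one kernel-verified Lean document; each statement's English description precedes it below -/
import Mathlib

section
/- Let Ω ⊆ ℝⁿ be a Lebesgue measurable set and φ a convex Φ-function on Ω satisfying (aDec) with exponent q > 1 and constant L_q. Let g, g¹, g², … : Ω → ℝᵐ be measurable with ∫_Ω φ(x,|g(x)|) dx < ∞, and suppose there exist a_k > 0 with a_k → 0 such that ∫_Ω φ(x, |g^k(x) − g(x)|/a_k) dx ≤ 1 for all k. Then limsup_{k→∞} ∫_Ω φ(x,|g^k(x)|) dx ≤ ∫_Ω φ(x,|g(x)|) dx. -/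
open MeasureTheory Set Filter Topology
open scoped ENNReal NNReal

noncomputable section

/-- Euclidean space `ℝⁿ`. -/
abbrev Eucl (n : ℕ) : Type := EuclideanSpace ℝ (Fin n)

/-- A modulus of continuity: a continuous non-decreasing `ω : [0,∞) → [0,∞)` with `ω 0 = 0`. -/
def IsModulus (ω : ℝ → ℝ) : Prop :=
  ContinuousOn ω (Ici 0) ∧ MonotoneOn ω (Ici 0) ∧ ω 0 = 0 ∧ ∀ r : ℝ, 0 ≤ r → 0 ≤ ω r

/-- `Ω` has Lipschitz boundary: near each boundary point, after an orthogonal change of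
coordinates, `Ω` coincides within a neighbourhood with the open region above the graph of a
Lipschitz function `ℝ^{n-1} → ℝ`. -/
def HasLipschitzBoundary (n : ℕ) (Ω : Set (Eucl n)) : Prop :=
  ∀ x ∈ frontier Ω,
    ∃ (A : Eucl n ≃ₗᵢ[ℝ] WithLp 2 (EuclideanSpace ℝ (Fin (n - 1)) × ℝ))
      (g : EuclideanSpace ℝ (Fin (n - 1)) → ℝ) (L : ℝ≥0) (U : Set (Eucl n)),
      LipschitzWith L g ∧ IsOpen U ∧ x ∈ U ∧
      Ω ∩ U = {y : Eucl n |
        g ((WithLp.equiv 2 (EuclideanSpace ℝ (Fin (n - 1)) × ℝ) (A y)).1)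
          < (WithLp.equiv 2 (EuclideanSpace ℝ (Fin (n - 1)) × ℝ) (A y)).2} ∩ U

/-- `φ` is a continuous convex Φ-function on `Ω`. -/
def IsPhiFunction {n : ℕ} (Ω : Set (Eucl n)) (φ : Eucl n → ℝ → ℝ) : Prop :=
  ContinuousOn (fun p : Eucl n × ℝ => φ p.1 p.2) (Ω ×ˢ Ici (0:ℝ)) ∧
  (∀ x ∈ Ω, ∀ t : ℝ, 0 ≤ t → 0 ≤ φ x t) ∧
  (∀ x ∈ Ω, MonotoneOn (φ x) (Ici (0:ℝ))) ∧
  (∀ x ∈ Ω, ConvexOn ℝ (Ici (0:ℝ)) (φ x)) ∧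
  (∀ x ∈ Ω, φ x 0 = 0) ∧
  (∀ x ∈ Ω, Tendsto (φ x) atTop atTop) ∧
  (∃ L₁ : ℝ, 1 ≤ L₁ ∧ ∀ x ∈ Ω, ∀ s t : ℝ, 0 < s → s ≤ t → φ x s / s ≤ L₁ * (φ x t / t))

/-- Pointwise Legendre–Fenchel conjugate `φ*(x,s) = sup_{t ≥ 0} (s·t − φ(x,t)) ∈ [0,∞]`. -/
def phiStar {n : ℕ} (φ : Eucl n → ℝ → ℝ) (x : Eucl n) (s : ℝ) : ℝ≥0∞ :=
  ⨆ t : ℝ, ⨆ _ : 0 ≤ t, ENNReal.ofReal (s * t - φ x t)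

/-- Divergence of a (differentiable) vector field. -/
def divg {n : ℕ} (ξ : Eucl n → Eucl n) (x : Eucl n) : ℝ :=
  ∑ i : Fin n, fderiv ℝ ξ x (EuclideanSpace.single i 1) i

/-- A `C¹` vector field compactly supported in `Ω`. -/
def TestVF {n : ℕ} (Ω : Set (Eucl n)) (ξ : Eucl n → Eucl n) : Prop :=
  ContDiff ℝ 1 ξ ∧ HasCompactSupport ξ ∧ tsupport ξ ⊆ Ω

/-- The variable-growth total variation
`TV_φ(v) = sup { ∫_Ω (v·div ξ − φ*(x,|ξ|)) dx : ξ ∈ C¹_c(Ω)ⁿ } ∈ [0,∞]`. -/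
def TVphi {n : ℕ} (Ω : Set (Eucl n)) (φ : Eucl n → ℝ → ℝ) (v : Eucl n → ℝ) : ℝ≥0∞ :=
  ⨆ ξ : {ξ : Eucl n → Eucl n // TestVF Ω ξ},
    ENNReal.ofReal (∫ x in Ω, v x * divg ξ.1 x) - ∫⁻ x in Ω, phiStar φ x ‖ξ.1 x‖

/-- Condition (A0). -/
def CondA0 {n : ℕ} (Ω : Set (Eucl n)) (φ : Eucl n → ℝ → ℝ) : Prop :=
  ∃ β : ℝ, 0 < β ∧ β ≤ 1 ∧ ∀ x ∈ Ω, φ x β ≤ 1 ∧ 1 ≤ φ x (1 / β)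

/-- Condition (aDec)_q with constant L_q. -/
def CondADecWith {n : ℕ} (Ω : Set (Eucl n)) (φ : Eucl n → ℝ → ℝ) (q Lq : ℝ) : Prop :=
  1 < q ∧ 1 ≤ Lq ∧ ∀ x ∈ Ω, ∀ s t : ℝ, 0 < s → s ≤ t → φ x t / t ^ q ≤ Lq * (φ x s / s ^ q)

/-- Condition (aDec). -/
def CondADec {n : ℕ} (Ω : Set (Eucl n)) (φ : Eucl n → ℝ → ℝ) : Prop :=
  ∃ q Lq : ℝ, CondADecWith Ω φ q Lq

/-- The recession function `φ'_∞(x) = lim_{t→∞} φ(x,t)/t ∈ [0,∞]`. -/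
def recessionFn {n : ℕ} (φ : Eucl n → ℝ → ℝ) (x : Eucl n) : ℝ≥0∞ :=
  Filter.limsup (fun t : ℝ => ENNReal.ofReal (φ x t / t)) atTop

/-- Condition (A1); the bound `φ(y,t) ≤ K·|x−y|^{−n}` is written multiplicatively. -/
def CondA1 {n : ℕ} (Ω : Set (Eucl n)) (φ : Eucl n → ℝ → ℝ) : Prop :=
  ∀ K : ℝ, 0 < K → ∃ β : ℝ, 0 < β ∧ β ≤ 1 ∧
    ∀ x ∈ Ω, ∀ y ∈ Ω, ∀ t : ℝ, 0 < t → dist x y ^ n * φ y t ≤ K →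
      φ x (β * t) ≤ φ y t + 1

/-- Condition (RVA1). -/
def CondRVA1 {n : ℕ} (Ω : Set (Eucl n)) (φ : Eucl n → ℝ → ℝ) : Prop :=
  CondA1 Ω φ ∧
  ∀ K : ℝ, 0 < K → ∃ ω : ℝ → ℝ, IsModulus ω ∧
    ∀ x ∈ Ω, ∀ y ∈ Ω, (recessionFn φ x < ⊤ ∨ recessionFn φ y < ⊤) →
      ∀ t : ℝ, 0 < t → dist x y ^ n * φ y t ≤ K →
        φ x (t / (1 + ω (dist x y))) ≤ φ y t + ω (dist x y)

/-- Condition (VA1) for the conjugate function `φ*`. -/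
def CondVA1star {n : ℕ} (Ω : Set (Eucl n)) (φ : Eucl n → ℝ → ℝ) : Prop :=
  ∀ K : ℝ, 0 < K → ∃ ω : ℝ → ℝ, IsModulus ω ∧
    ∀ x ∈ Ω, ∀ y ∈ Ω, ∀ s : ℝ, 0 < s →
      ENNReal.ofReal (dist x y ^ n) * phiStar φ y s ≤ ENNReal.ofReal K →
        phiStar φ x (s / (1 + ω (dist x y))) ≤ phiStar φ y s + ENNReal.ofReal (ω (dist x y))

/-- `ξ` has distributional divergence `w` on `Ω`. -/
def HasDistribDiv {n : ℕ} (Ω : Set (Eucl n)) (ξ : Eucl n → Eucl n) (w : Eucl n → ℝ) : Prop :=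
  ∀ ψ : Eucl n → ℝ, ContDiff ℝ (⊤ : ℕ∞) ψ → HasCompactSupport ψ → tsupport ψ ⊆ Ω →
    ∫ x in Ω, fderiv ℝ ψ x (ξ x) = - ∫ x in Ω, w x * ψ x

/-- `ξ` (with distributional divergence `w`) has vanishing normal trace `ν·ξ = 0`. -/
def ZeroNormalTrace {n : ℕ} (Ω : Set (Eucl n)) (ξ : Eucl n → Eucl n) (w : Eucl n → ℝ) : Prop :=
  ∀ ψ : Eucl n → ℝ, ContDiff ℝ (⊤ : ℕ∞) ψ →
    (∫ x in Ω, fderiv ℝ ψ x (ξ x)) + ∫ x in Ω, w x * ψ x = 0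

/-- The subdifferential relation `w ∈ ∂E_φ(v)` on `L²(Ω)`. -/
def InSubdiffTV {n : ℕ} (Ω : Set (Eucl n)) (φ : Eucl n → ℝ → ℝ) (v w : Eucl n → ℝ) : Prop :=
  TVphi Ω φ v < ⊤ ∧
  ∀ u : Eucl n → ℝ, MemLp u 2 (volume.restrict Ω) → TVphi Ω φ u < ⊤ →
    (TVphi Ω φ v).toReal + ∫ x in Ω, w x * (u x - v x) ≤ (TVphi Ω φ u).toReal

/-- The functional `F̃(w) = inf { ∫_Ω φ*(x,|ξ|) dx : ξ ∈ C¹_c(Ω)ⁿ, div ξ = w }`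
(the infimum over the empty set being `∞`). -/
def FTilde {n : ℕ} (Ω : Set (Eucl n)) (φ : Eucl n → ℝ → ℝ) (w : Eucl n → ℝ) : ℝ≥0∞ :=
  ⨅ ξ : {ξ : Eucl n → Eucl n // TestVF Ω ξ ∧ (fun x => divg ξ x) =ᵐ[volume.restrict Ω] w},
    ∫⁻ x in Ω, phiStar φ x ‖ξ.1 x‖

/-- The functional `F(w) = inf { ∫_Ω φ*(x,|ξ|) dx : ξ ∈ L¹(Ω;ℝⁿ), div ξ = w, ν·ξ = 0 }`
(the infimum over the empty set being `∞`). -/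
def Ffun {n : ℕ} (Ω : Set (Eucl n)) (φ : Eucl n → ℝ → ℝ) (w : Eucl n → ℝ) : ℝ≥0∞ :=
  ⨅ ξ : {ξ : Eucl n → Eucl n //
      Integrable ξ (volume.restrict Ω) ∧ HasDistribDiv Ω ξ w ∧ ZeroNormalTrace Ω ξ w},
    ∫⁻ x in Ω, phiStar φ x ‖ξ.1 x‖

/-- Integral of a function against a finite signed measure, via the Jordan decomposition. -/
def sInt {α : Type*} [MeasurableSpace α] (μ : SignedMeasure α) (ψ : α → ℝ) : ℝ :=
  ∫ x, ψ x ∂μ.toJordanDecomposition.posPart - ∫ x, ψ x ∂μ.toJordanDecomposition.negPart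

/-- `μ` is the Anzellotti-type pairing measure `(ξ, Dv)` on `Ω`: it is a finite signed
(Borel, hence Radon) measure concentrated on `Ω` satisfying
`∫ ψ dμ = −∫_Ω ψ·v·(div ξ) − ∫_Ω v·(ξ·∇ψ)` for all test functions `ψ ∈ C_c^∞(Ω)`;
here `w = div ξ`. -/
def PairingMeasure {n : ℕ} (Ω : Set (Eucl n)) (v : Eucl n → ℝ) (ξ : Eucl n → Eucl n)
    (w : Eucl n → ℝ) (μ : SignedMeasure (Eucl n)) : Prop :=
  (∀ B : Set (Eucl n), MeasurableSet B → μ B = μ (B ∩ Ω)) ∧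
  ∀ ψ : Eucl n → ℝ, ContDiff ℝ (⊤ : ℕ∞) ψ → HasCompactSupport ψ → tsupport ψ ⊆ Ω →
    sInt μ ψ = - ∫ x in Ω, ψ x * (v x * w x) - ∫ x in Ω, v x * fderiv ℝ ψ x (ξ x)

/-- The Rudin–Osher–Fatemi functional `ROF_φ(v) = λ·E_φ(v) + ½ ∫_Ω |v − f|² dx ∈ [0,∞]`. -/
def ROFfun {n : ℕ} (Ω : Set (Eucl n)) (φ : Eucl n → ℝ → ℝ) (lam : ℝ) (f v : Eucl n → ℝ) :
    ℝ≥0∞ :=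
  ENNReal.ofReal lam * TVphi Ω φ v + (∫⁻ x in Ω, ENNReal.ofReal ((v x - f x) ^ 2)) / 2

/-- modular convergence implies limsup of modulars bounded by the limit modular. -/
theorem statement3 {n m : ℕ} (Ω : Set (Eucl n)) (hΩ : MeasurableSet Ω)
    (φ : Eucl n → ℝ → ℝ)
    (hmeas : ∀ f : Eucl n → ℝ, Measurable f → Measurable fun x => φ x |f x|)
    (hnonneg : ∀ x ∈ Ω, ∀ t : ℝ, 0 ≤ t → 0 ≤ φ x t)
    (hmono : ∀ x ∈ Ω, MonotoneOn (φ x) (Ici (0:ℝ)))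
    (hconv : ∀ x ∈ Ω, ConvexOn ℝ (Ici (0:ℝ)) (φ x))
    (hzero : ∀ x ∈ Ω, φ x 0 = 0)
    (hinf : ∀ x ∈ Ω, Tendsto (φ x) atTop atTop)
    (hainc : ∃ L₁ : ℝ, 1 ≤ L₁ ∧ ∀ x ∈ Ω, ∀ s t : ℝ, 0 < s → s ≤ t →
      φ x s / s ≤ L₁ * (φ x t / t))
    (q Lq : ℝ) (hq : 1 < q) (hLq : 1 ≤ Lq)
    (haDec : ∀ x ∈ Ω, ∀ s t : ℝ, 0 < s → s ≤ t → φ x t / t ^ q ≤ Lq * (φ x s / s ^ q))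
    (g : Eucl n → Eucl m) (G : ℕ → Eucl n → Eucl m)
    (hg : Measurable g) (hG : ∀ k, Measurable (G k))
    (hgfin : ∫⁻ x in Ω, ENNReal.ofReal (φ x ‖g x‖) < ⊤)
    (a : ℕ → ℝ) (ha : ∀ k, 0 < a k) (ha0 : Tendsto a atTop (𝓝 0))
    (hbd : ∀ k, ∫⁻ x in Ω, ENNReal.ofReal (φ x (‖G k x - g x‖ / a k)) ≤ 1) :
    Filter.limsup (fun k => ∫⁻ x in Ω, ENNReal.ofReal (φ x ‖G k x‖)) atTop ≤
      ∫⁻ x in Ω, ENNReal.ofReal (φ x ‖g x‖) := by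
  -- θ j = 1/(j+2)
  set θ : ℕ → ℝ := fun j => 1 / ((j : ℝ) + 2) with hθdef
  have hθpos : ∀ j, 0 < θ j := fun j => by positivity
  have hθhalf : ∀ j, θ j ≤ 1 / 2 := by
    intro j
    have h2 : (2:ℝ) ≤ (j:ℝ) + 2 := by linarith [Nat.cast_nonneg (α := ℝ) j]
    exact one_div_le_one_div_of_le two_pos h2
  have hθlt1 : ∀ j, θ j < 1 := fun j => lt_of_le_of_lt (hθhalf j) (by norm_num)
  have h1θpos : ∀ j, 0 < 1 - θ j := fun j => by linarith [hθlt1 j]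
  -- measurability
  have hmg : Measurable fun x => ENNReal.ofReal (φ x ‖g x‖) := by
    have h := hmeas (fun x => ‖g x‖) hg.norm
    have : (fun x => φ x |‖g x‖|) = fun x => φ x ‖g x‖ := by
      funext x; rw [abs_norm]
    rw [this] at h
    exact h.ennreal_ofReal
  have hmF : ∀ j, Measurable fun x => ENNReal.ofReal (φ x (‖g x‖ / (1 - θ j))) := by
    intro j
    have h := hmeas (fun x => ‖g x‖ / (1 - θ j)) (hg.norm.div_const _)
    have he : (fun x => φ x |‖g x‖ / (1 - θ j)|) = fun x => φ x (‖g x‖ / (1 - θ j)) := by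
      funext x
      rw [abs_of_nonneg (div_nonneg (norm_nonneg _) (h1θpos j).le)]
    rw [he] at h
    exact h.ennreal_ofReal
  set I : ℕ → ℝ≥0∞ := fun j => ∫⁻ x in Ω, ENNReal.ofReal (φ x (‖g x‖ / (1 - θ j))) with hIdef
  -- Step 1 : limsup ≤ I j for every j
  have step1 : ∀ j, Filter.limsup (fun k => ∫⁻ x in Ω, ENNReal.ofReal (φ x ‖G k x‖)) atTop
      ≤ I j := by
    intro j
    set t := θ j with htdef
    have ht0 : 0 < t := hθpos j
    have ht1 : t < 1 := hθlt1 j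
    have h1t : 0 < 1 - t := h1θpos j
    have hev : ∀ᶠ k in atTop, a k ≤ t := by
      filter_upwards [ha0.eventually_lt_const ht0] with k hk using hk.le
    have hkey : ∀ᶠ k in atTop,
        (∫⁻ x in Ω, ENNReal.ofReal (φ x ‖G k x‖)) ≤ I j + ENNReal.ofReal (a k) := by
      filter_upwards [hev] with k hak
      have hptwise : ∀ x ∈ Ω,
          ENNReal.ofReal (φ x ‖G k x‖) ≤
            ENNReal.ofReal (φ x (‖g x‖ / (1 - t))) +
              ENNReal.ofReal (a k) * ENNReal.ofReal (φ x (‖G k x - g x‖ / a k)) := by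
        intro x hx
        set s := ‖g x‖ with hsdef
        set d := ‖G k x - g x‖ with hddef
        have hs : 0 ≤ s := norm_nonneg _
        have hd : 0 ≤ d := norm_nonneg _
        have hakpos : 0 < a k := ha k
        have htri : ‖G k x‖ ≤ s + d := by
          have := norm_sub_norm_le (G k x) (g x)
          linarith
        have hA : 0 ≤ s / (1 - t) := div_nonneg hs h1t.le
        have hB : 0 ≤ d / t := div_nonneg hd ht0.le
        have hC : 0 ≤ d / a k := div_nonneg hd hakpos.le
        have h2 : φ x ‖G k x‖ ≤ φ x (s + d) :=
          (hmono x hx) (mem_Ici.2 (norm_nonneg _)) (mem_Ici.2 (by linarith)) htri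
        have h3 : φ x (s + d) ≤ (1 - t) * φ x (s / (1 - t)) + t * φ x (d / t) := by
          have hcc := (hconv x hx).2 (mem_Ici.2 hA) (mem_Ici.2 hB)
            (by linarith : (0:ℝ) ≤ 1 - t) ht0.le (by ring)
          have heq : (1 - t) • (s / (1 - t)) + t • (d / t) = s + d := by
            simp only [smul_eq_mul]
            field_simp
          rw [heq] at hcc
          simpa using hcc
        have h4 : φ x (d / t) ≤ (a k / t) * φ x (d / a k) := by
          have hl0 : 0 ≤ a k / t := div_nonneg hakpos.le ht0.le
          have hl1 : a k / t ≤ 1 := (div_le_one ht0).2 hak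
          have hcc := (hconv x hx).2 (mem_Ici.2 hC) (mem_Ici.2 le_rfl)
            hl0 (by linarith : (0:ℝ) ≤ 1 - a k / t) (by ring)
          have heq : (a k / t) • (d / a k) + (1 - a k / t) • (0:ℝ) = d / t := by
            simp only [smul_eq_mul, mul_zero, add_zero]
            field_simp
          rw [heq, hzero x hx] at hcc
          simpa using hcc
        have h5 : φ x ‖G k x‖ ≤ (1 - t) * φ x (s / (1 - t)) + a k * φ x (d / a k) := by
          have h6 : t * φ x (d / t) ≤ a k * φ x (d / a k) := by
            calc t * φ x (d / t) ≤ t * ((a k / t) * φ x (d / a k)) := by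
                  exact mul_le_mul_of_nonneg_left h4 ht0.le
            _ = a k * φ x (d / a k) := by field_simp
          linarith
        have hφA : 0 ≤ φ x (s / (1 - t)) := hnonneg x hx _ hA
        have hφC : 0 ≤ φ x (d / a k) := hnonneg x hx _ hC
        calc ENNReal.ofReal (φ x ‖G k x‖)
            ≤ ENNReal.ofReal ((1 - t) * φ x (s / (1 - t)) + a k * φ x (d / a k)) :=
              ENNReal.ofReal_le_ofReal h5
          _ = ENNReal.ofReal ((1 - t) * φ x (s / (1 - t))) +
                ENNReal.ofReal (a k * φ x (d / a k)) :=
              ENNReal.ofReal_add (by positivity) (by positivity)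
          _ ≤ ENNReal.ofReal (φ x (s / (1 - t))) +
                ENNReal.ofReal (a k) * ENNReal.ofReal (φ x (d / a k)) :=
              add_le_add (ENNReal.ofReal_le_ofReal (by nlinarith))
                (ENNReal.ofReal_mul hakpos.le).le
      calc (∫⁻ x in Ω, ENNReal.ofReal (φ x ‖G k x‖))
          ≤ ∫⁻ x in Ω, (ENNReal.ofReal (φ x (‖g x‖ / (1 - t))) +
              ENNReal.ofReal (a k) * ENNReal.ofReal (φ x (‖G k x - g x‖ / a k))) := by
            refine lintegral_mono_ae ?_
            filter_upwards [ae_restrict_mem hΩ] with x hx using hptwise x hx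
        _ = I j + ENNReal.ofReal (a k) *
              ∫⁻ x in Ω, ENNReal.ofReal (φ x (‖G k x - g x‖ / a k)) := by
            rw [lintegral_add_left (hmF j), lintegral_const_mul' _ _ ENNReal.ofReal_ne_top]
        _ ≤ I j + ENNReal.ofReal (a k) * 1 := by gcongr; exact hbd k
        _ = I j + ENNReal.ofReal (a k) := by rw [mul_one]
    have htend : Tendsto (fun k => I j + ENNReal.ofReal (a k)) atTop (𝓝 (I j)) := by
      have : Tendsto (fun k => ENNReal.ofReal (a k)) atTop (𝓝 0) := by
        simpa using ENNReal.tendsto_ofReal ha0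
      simpa using Tendsto.const_add (I j) this
    calc Filter.limsup (fun k => ∫⁻ x in Ω, ENNReal.ofReal (φ x ‖G k x‖)) atTop
        ≤ Filter.limsup (fun k => I j + ENNReal.ofReal (a k)) atTop := limsup_le_limsup hkey
      _ = I j := htend.limsup_eq
  -- Step 2 : I j → ∫ φ(x,‖g‖)
  have step2 : Tendsto I atTop (𝓝 (∫⁻ x in Ω, ENNReal.ofReal (φ x ‖g x‖))) := by
    refine tendsto_lintegral_of_dominated_convergence
      (fun x => ENNReal.ofReal (Lq * 2 ^ q) * ENNReal.ofReal (φ x ‖g x‖)) hmF ?_ ?_ ?_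
    · -- bound
      intro j
      filter_upwards [ae_restrict_mem hΩ] with x hx
      rcases eq_or_lt_of_le (norm_nonneg (g x)) with hs0 | hs0
      · have : ‖g x‖ / (1 - θ j) = 0 := by rw [← hs0]; simp
        rw [this, hzero x hx]
        simp
      · set s := ‖g x‖ with hsdef
        set u := s / (1 - θ j) with hudef
        have hupos : 0 < u := div_pos hs0 (h1θpos j)
        have hsu : s ≤ u := by
          rw [hudef, le_div_iff₀ (h1θpos j)]
          nlinarith [hθpos j]
        have hDec := haDec x hx s u hs0 hsu
        have hsq : (0:ℝ) < s ^ q := Real.rpow_pos_of_pos hs0 q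
        have huq : (0:ℝ) < u ^ q := Real.rpow_pos_of_pos hupos q
        have hφu : φ x u ≤ Lq * φ x s * (u / s) ^ q := by
          rw [div_le_iff₀ huq] at hDec
          calc φ x u ≤ Lq * (φ x s / s ^ q) * u ^ q := hDec
            _ = Lq * φ x s * (u ^ q / s ^ q) := by ring
            _ = Lq * φ x s * (u / s) ^ q := by
                rw [← Real.div_rpow hupos.le hs0.le]
        have hus : u / s ≤ 2 := by
          rw [div_le_iff₀ hs0, hudef, div_le_iff₀ (h1θpos j)]
          have := hθhalf j
          nlinarith
        have h2q : (u / s) ^ q ≤ 2 ^ q :=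
          Real.rpow_le_rpow (by positivity) hus (by linarith)
        have hφs : 0 ≤ φ x s := hnonneg x hx s hs0.le
        have hLqφ : 0 ≤ Lq * φ x s := by positivity
        have hfinal : φ x u ≤ Lq * 2 ^ q * φ x s := by nlinarith
        calc ENNReal.ofReal (φ x u) ≤ ENNReal.ofReal (Lq * 2 ^ q * φ x s) :=
              ENNReal.ofReal_le_ofReal hfinal
          _ = ENNReal.ofReal (Lq * 2 ^ q) * ENNReal.ofReal (φ x s) := by
              rw [ENNReal.ofReal_mul (by positivity)]
    · -- finiteness
      rw [lintegral_const_mul' _ _ ENNReal.ofReal_ne_top]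
      exact (ENNReal.mul_lt_top ENNReal.ofReal_lt_top hgfin).ne
    · -- pointwise convergence
      filter_upwards [ae_restrict_mem hΩ] with x hx
      rcases eq_or_lt_of_le (norm_nonneg (g x)) with hs0 | hs0
      · have he : ∀ j, φ x (‖g x‖ / (1 - θ j)) = φ x ‖g x‖ := by
          intro j
          rw [← hs0]
          simp
        simp only [he]
        exact tendsto_const_nhds
      · have hθ0 : Tendsto θ atTop (𝓝 0) := by
          rw [hθdef]
          have h1 : Tendsto (fun j : ℕ => (j : ℝ) + 2) atTop atTop :=
            tendsto_atTop_add_const_right _ _ tendsto_natCast_atTop_atTop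
          simpa [one_div, Pi.inv_def] using h1.inv_tendsto_atTop
        have harg : Tendsto (fun j => ‖g x‖ / (1 - θ j)) atTop (𝓝 ‖g x‖) := by
          have h1 : Tendsto (fun j => 1 - θ j) atTop (𝓝 1) := by
            simpa using (tendsto_const_nhds (x := (1:ℝ))).sub hθ0
          have := (tendsto_const_nhds (x := ‖g x‖)).div h1 one_ne_zero
          simpa [Pi.div_def] using this
        have hcontOn : ContinuousOn (φ x) (Ioi (0:ℝ)) :=
          ((hconv x hx).subset Ioi_subset_Ici_self (convex_Ioi 0)).continuousOn isOpen_Ioi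
        have hcontAt : ContinuousAt (φ x) ‖g x‖ :=
          hcontOn.continuousAt (isOpen_Ioi.mem_nhds hs0)
        exact ENNReal.tendsto_ofReal (hcontAt.tendsto.comp harg)
  exact ge_of_tendsto' step2 step1

end
end

section
/- Let Ω ⊆ ℝⁿ be a bounded open set with Lipschitz boundary, q > 1, and a : Ω → [0,∞) measurable, and define the double-phase function φ_dp(x,t) = t + a(x)·t^q. Then φ_dp satisfies the condition (RVA1) if and only if both of the following hold: (i) there is C > 0 such that a(y) ≤ C·(a(x) + |x−y|^{n(q−1)}) for all x, y ∈ Ω; and (ii) for every ε > 0 there is r > 0 such that a(x) ≤ ε·|x−y|^{n(q−1)} whenever x, y ∈ Ω, a(y) = 0 and 0 < |x−y| < r. -/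
open MeasureTheory Set Filter Topology
open scoped ENNReal NNReal

noncomputable section

private lemma recession_dp' {n : ℕ} (a : Eucl n → ℝ) (q : ℝ) (hq : 1 < q)
    (x : Eucl n) (ha : 0 ≤ a x) :
    recessionFn (fun x t => t + a x * t ^ q) x < ⊤ ↔ a x = 0 := by
  constructor
  · intro h
    by_contra hne
    have hax : 0 < a x := lt_of_le_of_ne ha (Ne.symm hne)
    have htend : Tendsto (fun t : ℝ => (t + a x * t ^ q) / t) atTop atTop := by
      have h1 : Tendsto (fun t : ℝ => 1 + a x * t ^ (q - 1)) atTop atTop :=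
        tendsto_atTop_add_const_left _ 1
          ((tendsto_rpow_atTop (by linarith)).const_mul_atTop hax)
      refine Tendsto.congr' ?_ h1
      filter_upwards [eventually_gt_atTop 0] with t ht
      rw [Real.rpow_sub ht, Real.rpow_one]
      field_simp
    have h2 : Tendsto (fun t : ℝ => ENNReal.ofReal ((t + a x * t ^ q) / t)) atTop (𝓝 ⊤) :=
      ENNReal.tendsto_ofReal_atTop.comp htend
    have h3 : recessionFn (fun x t => t + a x * t ^ q) x = ⊤ := h2.limsup_eq
    rw [h3] at h
    exact absurd h (lt_irrefl _)
  · intro h0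
    have h3 : recessionFn (fun x t => t + a x * t ^ q) x = 1 := by
      unfold recessionFn
      have he : (fun t : ℝ => ENNReal.ofReal ((t + a x * t ^ q) / t))
          =ᶠ[atTop] fun _ => (1 : ℝ≥0∞) := by
        filter_upwards [eventually_gt_atTop 0] with t ht
        rw [h0]
        simp [div_self (ne_of_gt ht)]
      rw [limsup_congr he, limsup_const]
    rw [h3]
    exact ENNReal.one_lt_top

private lemma modulus_of_decay (A : ℝ → ℝ) (hmono : Monotone A) (hnn : ∀ d, 0 ≤ A d)
    (hzero : A 0 = 0)
    (hsmall : ∀ ε : ℝ, 0 < ε → ∃ r : ℝ, 0 < r ∧ ∀ d : ℝ, d < r → A d ≤ ε) :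
    ∃ E : ℝ → ℝ, IsModulus E ∧ ∀ d : ℝ, 0 ≤ d → A d ≤ E d := by
  set E : ℝ → ℝ := fun d => ∫ s in (1:ℝ)..2, A (d * s) with hE
  have hint : ∀ d c₁ c₂ : ℝ, IntervalIntegrable (fun s => A (d * s)) volume c₁ c₂ := by
    intro d c₁ c₂
    rcases le_or_gt 0 d with hd | hd
    · exact Monotone.intervalIntegrable
        (fun s₁ s₂ h => hmono (mul_le_mul_of_nonneg_left h hd))
    · exact Antitone.intervalIntegrable
        (fun s₁ s₂ h => hmono (mul_le_mul_of_nonpos_left h hd.le))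
  have hE0 : E 0 = 0 := by
    simp only [hE, zero_mul, intervalIntegral.integral_const, smul_eq_mul]
    rw [hzero]; ring
  have hnnE : ∀ d, 0 ≤ E d := fun d =>
    intervalIntegral.integral_nonneg one_le_two (fun u _ => hnn _)
  have hmonoE : Monotone E := by
    intro d₁ d₂ h
    refine intervalIntegral.integral_mono_on one_le_two (hint d₁ 1 2) (hint d₂ 1 2) ?_
    intro s hs
    exact hmono (mul_le_mul_of_nonneg_right h (by linarith [hs.1]))
  have hAE : ∀ d : ℝ, 0 ≤ d → A d ≤ E d := by
    intro d hd
    have h1 : (∫ _ in (1:ℝ)..2, A d) ≤ E d := by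
      refine intervalIntegral.integral_mono_on one_le_two intervalIntegrable_const
        (hint d 1 2) ?_
      intro s hs
      exact hmono (by nlinarith [hs.1])
    norm_num at h1
    exact h1
  have hEA : ∀ d : ℝ, 0 ≤ d → E d ≤ A (2 * d) := by
    intro d hd
    have h1 : E d ≤ ∫ _ in (1:ℝ)..2, A (2 * d) := by
      refine intervalIntegral.integral_mono_on one_le_two (hint d 1 2)
        intervalIntegrable_const ?_
      intro s hs
      exact hmono (by nlinarith [hs.2])
    norm_num at h1
    exact h1
  have hcont : ContinuousOn E (Ici 0) := by
    set F : ℝ → ℝ := fun b => ∫ u in (0:ℝ)..b, A u with hF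
    have hFc : Continuous F :=
      intervalIntegral.continuous_primitive (fun c₁ c₂ => hmono.intervalIntegrable) 0
    have hform : ∀ d : ℝ, d ≠ 0 → E d = d⁻¹ * (F (2 * d) - F d) := by
      intro d hd
      have h1 : E d = d⁻¹ • ∫ u in (d*1)..(d*2), A u := by
        rw [hE]
        exact intervalIntegral.integral_comp_mul_left _ hd
      rw [h1, smul_eq_mul]
      congr 1
      rw [mul_one, show d * 2 = 2 * d by ring]
      rw [← intervalIntegral.integral_interval_sub_left
        (hmono.intervalIntegrable (a := 0) (b := 2 * d)) (hmono.intervalIntegrable)]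
    intro x hx
    rcases eq_or_lt_of_le (mem_Ici.1 hx) with h0 | hpos
    · rw [ContinuousWithinAt, ← h0, hE0]
      rw [Metric.tendsto_nhdsWithin_nhds]
      intro ε hε
      obtain ⟨r, hr, hsm⟩ := hsmall (ε / 2) (by linarith)
      refine ⟨r / 2, by linarith, ?_⟩
      intro d hd hdist
      rw [Real.dist_eq, sub_zero] at hdist ⊢
      rw [abs_of_nonneg (hnnE d)]
      have hd0 : 0 ≤ d := mem_Ici.1 hd
      have h3 : E d ≤ A (2 * d) := hEA d hd0
      have h2 : A (2 * d) ≤ ε / 2 := hsm _ (by rw [abs_of_nonneg hd0] at hdist; linarith)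
      linarith
    · have key : ∀ᶠ d in 𝓝 x, (fun d => d⁻¹ * (F (2 * d) - F d)) d = E d := by
        filter_upwards [isOpen_Ioi.mem_nhds hpos] with d hd
        exact (hform d (ne_of_gt hd)).symm
      have hG : ContinuousAt (fun d => d⁻¹ * (F (2 * d) - F d)) x := by
        refine ContinuousAt.mul (continuousAt_inv₀ hpos.ne') ?_
        exact ((hFc.comp (continuous_mul_left 2)).continuousAt).sub hFc.continuousAt
      exact (hG.congr key).continuousWithinAt
  exact ⟨E, ⟨hcont, hmonoE.monotoneOn _, hE0, fun r _ => hnnE r⟩, hAE⟩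


private lemma ratio_modulus {n : ℕ} (Ω : Set (Eucl n)) (a : Eucl n → ℝ)
    (q C : ℝ) (hq : 1 < q) (hC : 0 < C)
    (hi : ∀ x ∈ Ω, ∀ y ∈ Ω, a y ≤ C * (a x + dist x y ^ ((n:ℝ)*(q-1))))
    (hii : ∀ ε : ℝ, 0 < ε → ∃ r : ℝ, 0 < r ∧ ∀ x ∈ Ω, ∀ y ∈ Ω, a y = 0 →
      0 < dist x y → dist x y < r → a x ≤ ε * dist x y ^ ((n:ℝ)*(q-1))) :
    ∃ E : ℝ → ℝ, IsModulus E ∧ ∀ x ∈ Ω, ∀ y ∈ Ω, a y = 0 → 0 < dist x y →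
      a x ≤ E (dist x y) * dist x y ^ ((n:ℝ)*(q-1)) := by
  set S : ℝ → Set ℝ := fun d => insert 0 {r : ℝ | ∃ x, x ∈ Ω ∧ ∃ y, y ∈ Ω ∧
    a y = 0 ∧ 0 < dist x y ∧ dist x y ≤ d ∧ r = a x / dist x y ^ ((n:ℝ)*(q-1))} with hS
  set A : ℝ → ℝ := fun d => sSup (S d) with hA
  have hbdd : ∀ d : ℝ, BddAbove (S d) := by
    intro d
    refine ⟨max C 0, ?_⟩
    rintro r (rfl | ⟨x, hx, y, hy, hay, hd, -, rfl⟩)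
    · exact le_max_right _ _
    · have h1 : a x ≤ C * dist x y ^ ((n:ℝ)*(q-1)) := by
        have h := hi y hy x hx
        rw [hay, dist_comm y x] at h
        simpa using h
      have hdq : (0:ℝ) < dist x y ^ ((n:ℝ)*(q-1)) := Real.rpow_pos_of_pos hd _
      have h2 : a x / dist x y ^ ((n:ℝ)*(q-1)) ≤ C := by
        rw [div_le_iff₀ hdq]
        linarith
      exact le_trans h2 (le_max_left _ _)
  have hAmono : Monotone A := by
    intro d₁ d₂ h
    apply csSup_le_csSup (hbdd d₂) ⟨0, mem_insert _ _⟩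
    rintro r (rfl | ⟨x, hx, y, hy, hay, hd, hdle, rfl⟩)
    · exact mem_insert _ _
    · exact mem_insert_of_mem _ ⟨x, hx, y, hy, hay, hd, le_trans hdle h, rfl⟩
  have hAnn : ∀ d, 0 ≤ A d := fun d => le_csSup (hbdd d) (mem_insert _ _)
  have hA0 : A 0 = 0 := by
    refine le_antisymm ?_ (hAnn 0)
    refine csSup_le ⟨0, mem_insert _ _⟩ ?_
    rintro r (rfl | ⟨x, hx, y, hy, hay, hd, hdle, rfl⟩)
    · exact le_refl 0
    · exact absurd (lt_of_lt_of_le hd hdle) (lt_irrefl 0)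
  have hAsmall : ∀ ε : ℝ, 0 < ε → ∃ r : ℝ, 0 < r ∧ ∀ d : ℝ, d < r → A d ≤ ε := by
    intro ε hε
    obtain ⟨r, hr, hrr⟩ := hii ε hε
    refine ⟨r, hr, ?_⟩
    intro d hd
    refine csSup_le ⟨0, mem_insert _ _⟩ ?_
    rintro s (rfl | ⟨x, hx, y, hy, hay, hdxy, hdle, rfl⟩)
    · exact hε.le
    · have h1 := hrr x hx y hy hay hdxy (lt_of_le_of_lt hdle hd)
      have hdq : (0:ℝ) < dist x y ^ ((n:ℝ)*(q-1)) := Real.rpow_pos_of_pos hdxy _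
      rw [div_le_iff₀ hdq]
      linarith
  obtain ⟨E, hEmod, hAE⟩ := modulus_of_decay A hAmono hAnn hA0 hAsmall
  refine ⟨E, hEmod, ?_⟩
  intro x hx y hy hay hd
  have hdq : (0:ℝ) < dist x y ^ ((n:ℝ)*(q-1)) := Real.rpow_pos_of_pos hd _
  have hmem : a x / dist x y ^ ((n:ℝ)*(q-1)) ∈ S (dist x y) :=
    mem_insert_of_mem _ ⟨x, hx, y, hy, hay, hd, le_rfl, rfl⟩
  have h1 : a x / dist x y ^ ((n:ℝ)*(q-1)) ≤ A (dist x y) := le_csSup (hbdd _) hmem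
  have h2 : A (dist x y) ≤ E (dist x y) := hAE _ dist_nonneg
  rw [div_le_iff₀ hdq] at h1
  nlinarith [h1, h2, hdq]

set_option maxHeartbeats 4000000 in
/-- characterisation of (RVA1) for the double-phase function. -/
theorem statement16 {n : ℕ} (hn : 1 ≤ n) (Ω : Set (Eucl n)) (hΩo : IsOpen Ω)
    (hΩb : Bornology.IsBounded Ω) (hΩl : HasLipschitzBoundary n Ω)
    (q : ℝ) (hq : 1 < q) (a : Eucl n → ℝ) (hameas : Measurable a) (ha0 : ∀ x, 0 ≤ a x) :
    CondRVA1 Ω (fun x t => t + a x * t ^ q) ↔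
      ((∃ C : ℝ, 0 < C ∧ ∀ x ∈ Ω, ∀ y ∈ Ω,
          a y ≤ C * (a x + dist x y ^ ((n : ℝ) * (q - 1)))) ∧
       (∀ ε : ℝ, 0 < ε → ∃ r : ℝ, 0 < r ∧ ∀ x ∈ Ω, ∀ y ∈ Ω, a y = 0 →
          0 < dist x y → dist x y < r → a x ≤ ε * dist x y ^ ((n : ℝ) * (q - 1)))) := by
  have hq1 : (0:ℝ) < q - 1 := by linarith
  have hn0 : (0:ℝ) < (n:ℝ) := by exact_mod_cast Nat.pos_of_ne_zero (by omega)
  have hnq : (0:ℝ) < (n:ℝ) * (q-1) := by positivity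
  have hid : ∀ d : ℝ, 0 < d → ((d ^ n : ℝ)) ^ (q-1) = d ^ ((n:ℝ)*(q-1)) := by
    intro d hd
    rw [← Real.rpow_natCast d n, ← Real.rpow_mul hd.le]
  have rpow_split : ∀ s : ℝ, 0 < s → s ^ q = s ^ (q-1) * s := by
    intro s hs
    nth_rewrite 1 [show q = q - 1 + 1 by ring]
    rw [Real.rpow_add hs, Real.rpow_one]
  constructor
  · rintro ⟨hA1, hω⟩
    constructor
    · -- (i)
      obtain ⟨β, hβ0, hβle1, hβ⟩ := hA1 1 one_pos
      obtain ⟨D₀, hD₀⟩ := Metric.isBounded_iff.1 hΩb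
      set D := max D₀ 0 with hD
      have hβq : (0:ℝ) < β ^ q := Real.rpow_pos_of_pos hβ0 q
      have h2q : (0:ℝ) < 2 ^ q := Real.rpow_pos_of_pos two_pos q
      have h2qne : (2:ℝ)^q ≠ 0 := h2q.ne'
      have h2q1 : (1:ℝ) ≤ 2 ^ q := Real.one_le_rpow one_le_two (by linarith)
      have hDn : (0:ℝ) ≤ D^n := pow_nonneg (le_max_right _ _) n
      set Cc := 2^q * (1 + D^n) / β^q + 1 with hCc
      have hcoef : (0:ℝ) ≤ 2^q * (1 + D^n) / β^q := by positivity
      have hCc0 : 0 < Cc := by positivity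
      have main : ∀ x ∈ Ω, ∀ y ∈ Ω, a x ≤ Cc * (a y + dist x y ^ ((n:ℝ)*(q-1))) := by
        intro x hx y hy
        rcases (dist_nonneg (x := x) (y := y)).eq_or_lt with hd0 | hd
        · have hxy : x = y := dist_eq_zero.1 hd0.symm
          subst hxy
          have h1 : (0:ℝ) ≤ dist x x ^ ((n:ℝ)*(q-1)) := Real.rpow_nonneg dist_nonneg _
          have hCc1 : (1:ℝ) ≤ Cc := by rw [hCc]; linarith [hcoef]
          nlinarith [ha0 x, mul_le_mul_of_nonneg_right hCc1 (ha0 x),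
            mul_nonneg hCc0.le h1]
        · have hdD : dist x y ≤ D := le_trans (hD₀ hx hy) (le_max_left _ _)
          set d := dist x y with hdd
          have hdn : (0:ℝ) < d^n := pow_pos hd n
          have hdq : (0:ℝ) < d ^ ((n:ℝ)*(q-1)) := Real.rpow_pos_of_pos hd _
          have hdnD : d^n ≤ D^n := pow_le_pow_left₀ hd.le hdD n
          have h1Dv : (1:ℝ) ≤ D^n * (d^n)⁻¹ := by
            have e : d^n * (d^n)⁻¹ = 1 := mul_inv_cancel₀ hdn.ne'
            nlinarith [inv_pos.2 hdn]
          have core : ∀ t : ℝ, 0 < t → d^n * (t + a y*t^q) ≤ 1 →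
              a x * (β^q * t^q) ≤ (1+D^n)*(d^n)⁻¹ := by
            intro t ht hcond
            have hmain : β*t + a x*(β*t)^q ≤ (t + a y*t^q) + 1 :=
              hβ x hx y hy t ht hcond
            have hexp : (β*t)^q = β^q*t^q := Real.mul_rpow hβ0.le ht.le
            rw [hexp] at hmain
            have hφy : t + a y*t^q ≤ (d^n)⁻¹ := by
              rw [← one_div, le_div_iff₀ hdn]
              linarith
            linarith [hmain, hφy, h1Dv, mul_pos hβ0 ht]
          have e7 : (d^n:ℝ)^q * (d^n)⁻¹ = d ^ ((n:ℝ)*(q-1)) := by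
            rw [rpow_split (d^n) hdn, hid d hd]
            field_simp
          have hW : (0:ℝ) < (d^n:ℝ)^q := Real.rpow_pos_of_pos hdn q
          have finishA : ∀ t : ℝ, t^q = ((d^n)^q)⁻¹/2^q →
              a x * (β^q * t^q) ≤ (1+D^n)*(d^n)⁻¹ →
              a x ≤ 2^q*(1+D^n)/β^q * d^((n:ℝ)*(q-1)) := by
            intro t htq h2
            rw [htq] at h2
            have h7 := mul_le_mul_of_nonneg_right h2
              (by positivity : (0:ℝ) ≤ 2^q*(d^n)^q)
            have h8 : a x * β^q ≤ (1+D^n)*2^q*d^((n:ℝ)*(q-1)) := by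
              calc a x * β^q
                  = a x * (β^q * (((d^n)^q)⁻¹/2^q)) * (2^q*(d^n)^q) := by
                    field_simp
                _ ≤ (1+D^n)*(d^n)⁻¹*(2^q*(d^n)^q) := h7
                _ = (1+D^n)*2^q*((d^n)^q*(d^n)⁻¹) := by ring
                _ = (1+D^n)*2^q*d^((n:ℝ)*(q-1)) := by rw [e7]
            rw [div_mul_eq_mul_div, le_div_iff₀ hβq]
            nlinarith [h8]
          have finishB : a y ≠ 0 → ∀ t : ℝ, t^q = (1/(a y*d^n))/2^q →
              a x * (β^q * t^q) ≤ (1+D^n)*(d^n)⁻¹ →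
              a x ≤ 2^q*(1+D^n)/β^q * a y := by
            intro hay0 t htq h2
            have hay : 0 < a y := lt_of_le_of_ne (ha0 y) (Ne.symm hay0)
            rw [htq] at h2
            have h7 := mul_le_mul_of_nonneg_right h2
              (by positivity : (0:ℝ) ≤ 2^q*(a y*d^n))
            have h8 : a x * β^q ≤ (1+D^n)*2^q*a y := by
              calc a x * β^q
                  = a x * (β^q * ((1/(a y*d^n))/2^q)) * (2^q*(a y*d^n)) := by
                    field_simp
                _ ≤ (1+D^n)*(d^n)⁻¹*(2^q*(a y*d^n)) := h7
                _ = (1+D^n)*2^q*a y*(d^n*(d^n)⁻¹) := by ring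
                _ = (1+D^n)*2^q*a y := by rw [mul_inv_cancel₀ hdn.ne', mul_one]
            rw [div_mul_eq_mul_div, le_div_iff₀ hβq]
            nlinarith [h8]
          rcases (ha0 y).eq_or_lt with hay | hay
          · -- a y = 0
            set t := (d^n)⁻¹/2 with htdef
            have ht : 0 < t := by positivity
            have hcond : d^n * (t + a y*t^q) ≤ 1 := by
              rw [← hay]
              have e : d^n*((d^n)⁻¹/2 + 0*((d^n)⁻¹/2)^q) = 1/2 := by
                field_simp
                ring
              rw [htdef, e]
              norm_num
            have h2 := core t ht hcond
            have htq : t^q = ((d^n)^q)⁻¹/2^q := by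
              rw [htdef, Real.div_rpow (inv_nonneg.2 hdn.le) (by norm_num : (0:ℝ) ≤ 2),
                Real.inv_rpow hdn.le]
            have h9 := finishA t htq h2
            have hcy : 0 ≤ 2^q*(1+D^n)/β^q * a y := mul_nonneg hcoef (ha0 y)
            have hrw : Cc * (a y + d^((n:ℝ)*(q-1))) =
                2^q*(1+D^n)/β^q * a y + 2^q*(1+D^n)/β^q * d^((n:ℝ)*(q-1))
                + a y + d^((n:ℝ)*(q-1)) := by rw [hCc]; ring
            rw [hrw]
            linarith [h9, hcy, ha0 y, hdq.le]
          · -- a y > 0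
            have hayd : (0:ℝ) < a y * d^n := mul_pos hay hdn
            set B := (1/(a y * d^n)) ^ (1/q) with hB
            have hB0 : 0 < B := Real.rpow_pos_of_pos (by positivity) _
            have hBq : B ^ q = 1/(a y * d^n) := by
              rw [hB, ← Real.rpow_mul (by positivity : (0:ℝ) ≤ 1/(a y*d^n)),
                one_div q, inv_mul_cancel₀ (by linarith : q ≠ 0), Real.rpow_one]
            set t := min ((d^n)⁻¹) B / 2 with htdef
            have htmin : 0 < min ((d^n)⁻¹) B := lt_min (inv_pos.2 hdn) hB0
            have ht : 0 < t := by positivity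
            have ht2 : t ≤ (d^n)⁻¹/2 := by
              have := min_le_left ((d^n)⁻¹) B
              rw [htdef]
              linarith
            have ht3 : t ≤ B/2 := by
              have := min_le_right ((d^n)⁻¹) B
              rw [htdef]
              linarith
            have h2ge2 : (2:ℝ) ≤ 2^q := by
              nth_rewrite 1 [← Real.rpow_one 2]
              exact Real.rpow_le_rpow_of_exponent_le one_le_two hq.le
            have htq : t^q ≤ (1/(a y*d^n))/2^q := by
              have h1 := Real.rpow_le_rpow ht.le ht3 (by linarith : (0:ℝ) ≤ q)
              rwa [Real.div_rpow hB0.le (by norm_num : (0:ℝ) ≤ 2), hBq] at h1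
            have hcond : d^n * (t + a y*t^q) ≤ 1 := by
              have c1 : d^n * t ≤ 1/2 := by
                have h1 := mul_le_mul_of_nonneg_left ht2 hdn.le
                have e : d^n * ((d^n)⁻¹/2) = 1/2 := by field_simp
                linarith
              have c2 : d^n * (a y * t^q) ≤ 1/2 := by
                have h1 : a y * t^q ≤ a y * ((1/(a y*d^n))/2^q) :=
                  mul_le_mul_of_nonneg_left htq hay.le
                have h1' := mul_le_mul_of_nonneg_left h1 hdn.le
                have e : d^n * (a y * ((1/(a y*d^n))/2^q)) = 1/2^q := by
                  field_simp
                have e2 : (1:ℝ)/2^q ≤ 1/2 := by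
                  apply one_div_le_one_div_of_le two_pos h2ge2
                linarith
              have e3 : d^n*(t + a y*t^q) = d^n*t + d^n*(a y*t^q) := by ring
              linarith
            have h2 := core t ht hcond
            rcases min_cases ((d^n)⁻¹) B with ⟨hmin, -⟩ | ⟨hmin, -⟩
            · have htqA : t^q = ((d^n)^q)⁻¹/2^q := by
                rw [htdef, hmin, Real.div_rpow (inv_nonneg.2 hdn.le)
                  (by norm_num : (0:ℝ) ≤ 2), Real.inv_rpow hdn.le]
              have h9 := finishA t htqA h2
              have hcy : 0 ≤ 2^q*(1+D^n)/β^q * a y := mul_nonneg hcoef (ha0 y)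
              have hrw : Cc * (a y + d^((n:ℝ)*(q-1))) =
                  2^q*(1+D^n)/β^q * a y + 2^q*(1+D^n)/β^q * d^((n:ℝ)*(q-1))
                  + a y + d^((n:ℝ)*(q-1)) := by rw [hCc]; ring
              rw [hrw]
              linarith [h9, hcy, ha0 y, hdq.le]
            · have htqB : t^q = (1/(a y*d^n))/2^q := by
                rw [htdef, hmin, Real.div_rpow hB0.le (by norm_num : (0:ℝ) ≤ 2), hBq]
              have h9 := finishB hay.ne' t htqB h2
              have hcy : 0 ≤ 2^q*(1+D^n)/β^q * d^((n:ℝ)*(q-1)) := mul_nonneg hcoef hdq.le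
              have hrw : Cc * (a y + d^((n:ℝ)*(q-1))) =
                  2^q*(1+D^n)/β^q * a y + 2^q*(1+D^n)/β^q * d^((n:ℝ)*(q-1))
                  + a y + d^((n:ℝ)*(q-1)) := by rw [hCc]; ring
              rw [hrw]
              linarith [h9, hcy, ha0 y, hdq.le]
      refine ⟨Cc, hCc0, ?_⟩
      intro x hx y hy
      have h := main y hy x hx
      rwa [dist_comm] at h
    · -- (ii)
      intro ε hε
      obtain ⟨ω, hωmod, hωP⟩ := hω 1 one_pos
      obtain ⟨hωc, hωm, hω0, hωnn⟩ := hωmod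
      have h2q : (0:ℝ) < 2^q := Real.rpow_pos_of_pos two_pos q
      set δ : ℝ := min 1 (ε/(3*2^q)) with hδ
      have hδ0 : 0 < δ := lt_min one_pos (by positivity)
      have hδ1 : δ ≤ 1 := min_le_left _ _
      have hcw : Tendsto ω (𝓝[Ici 0] 0) (𝓝 0) := by
        have h := hωc 0 (mem_Ici.2 le_rfl)
        rw [ContinuousWithinAt, hω0] at h
        exact h
      rw [Metric.tendsto_nhdsWithin_nhds] at hcw
      obtain ⟨r₀, hr₀, hr⟩ := hcw δ hδ0
      refine ⟨min r₀ 1, lt_min hr₀ one_pos, ?_⟩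
      intro x hx y hy hay hd hdr
      have hdn : (0:ℝ) < dist x y ^ n := pow_pos hd n
      have hωd : ω (dist x y) < δ := by
        have h1 := hr (mem_Ici.2 dist_nonneg) (show dist (dist x y) 0 < r₀ by
          rw [Real.dist_eq, sub_zero, abs_of_nonneg dist_nonneg]
          exact lt_of_lt_of_le hdr (min_le_left _ _))
        rwa [Real.dist_eq, sub_zero, abs_of_nonneg (hωnn _ dist_nonneg)] at h1
      set w := ω (dist x y) with hw
      have hw0 : 0 ≤ w := hωnn _ dist_nonneg
      have hw1 : w ≤ 1 := le_trans hωd.le hδ1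
      have hwε : 3*2^q*w ≤ ε := by
        have h1 : δ ≤ ε/(3*2^q) := min_le_right _ _
        have h2 : w ≤ ε/(3*2^q) := le_trans hωd.le h1
        rw [le_div_iff₀ (by positivity)] at h2
        linarith
      have h1w : (0:ℝ) < 1 + w := by linarith
      set t := ((dist x y) ^ n)⁻¹ with ht'
      have ht : 0 < t := inv_pos.2 hdn
      have hrec : recessionFn (fun x t => t + a x*t^q) y < ⊤ :=
        (recession_dp' a q hq y (ha0 y)).2 hay
      have hdninv : dist x y ^ n * t = 1 := mul_inv_cancel₀ hdn.ne'
      have hcond : dist x y ^ n * (t + a y * t^q) ≤ 1 := by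
        rw [hay]
        simp only [zero_mul, add_zero]
        rw [hdninv]
      have hmain : t/(1+w) + a x * (t/(1+w))^q ≤ (t + a y*t^q) + w :=
        hωP x hx y hy (Or.inr hrec) t ht hcond
      rw [hay] at hmain
      have hd1 : dist x y ≤ 1 := le_of_lt (lt_of_lt_of_le hdr (min_le_right _ _))
      have hdn1 : dist x y ^ n ≤ 1 := pow_le_one₀ dist_nonneg hd1
      have ht1 : 1 ≤ t := by nlinarith [hdninv, ht.le]
      have hdiv : (t/(1+w))^q = t^q/(1+w)^q := Real.div_rpow ht.le h1w.le q
      rw [hdiv] at hmain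
      have hq0 : (0:ℝ) < (1+w)^q := Real.rpow_pos_of_pos h1w q
      have hstep : t + w - t/(1+w) ≤ 3*w*t := by
        have e : t + w - t/(1+w) = (t*w + w + w^2)/(1+w) := by
          field_simp
          ring
        have h2 : (t*w + w + w^2)/(1+w) ≤ t*w + w + w^2 := by
          apply div_le_self (by nlinarith) (by linarith)
        nlinarith [mul_nonneg (sub_nonneg.2 ht1) hw0, mul_nonneg (sub_nonneg.2 hw1) hw0]
      have hup : (1+w)^q ≤ 2^q := Real.rpow_le_rpow h1w.le (by linarith) (by linarith)
      have haxt : a x * t^q ≤ 3*w*t*2^q := by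
        have h3 : a x * (t^q/(1+w)^q) ≤ 3*w*t := by linarith [hmain, hstep]
        have h4 := mul_le_mul_of_nonneg_right h3 hq0.le
        have e4 : a x * (t^q/(1+w)^q) * (1+w)^q = a x * t^q := by
          field_simp
        rw [e4] at h4
        calc a x * t^q ≤ 3*w*t*(1+w)^q := h4
          _ ≤ 3*w*t*2^q := mul_le_mul_of_nonneg_left hup
              (mul_nonneg (mul_nonneg (by norm_num) hw0) ht.le)
      have ht9 : a x * t^(q-1) ≤ 3*w*2^q := by
        have e5 : a x * t^q = a x * t^(q-1) * t := by rw [rpow_split t ht]; ring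
        rw [e5] at haxt
        exact le_of_mul_le_mul_right (by nlinarith [haxt]) ht
      have h5 : t^(q-1) = (dist x y ^ ((n:ℝ)*(q-1)))⁻¹ := by
        rw [ht', Real.inv_rpow (pow_nonneg dist_nonneg n), hid _ hd]
      rw [h5] at ht9
      have hdq : (0:ℝ) < dist x y ^ ((n:ℝ)*(q-1)) := Real.rpow_pos_of_pos hd _
      have h6 := mul_le_mul_of_nonneg_right ht9 hdq.le
      have e6 : a x * (dist x y ^ ((n:ℝ)*(q-1)))⁻¹ * dist x y ^ ((n:ℝ)*(q-1)) = a x := by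
        field_simp
      rw [e6] at h6
      calc a x ≤ 3*w*2^q * dist x y ^ ((n:ℝ)*(q-1)) := h6
        _ ≤ ε * dist x y ^ ((n:ℝ)*(q-1)) :=
            mul_le_mul_of_nonneg_right (by linarith [hwε]) hdq.le
  · rintro ⟨⟨C, hC, hi⟩, hii⟩
    constructor
    · -- CondA1
      intro K hK
      have hKq : (0:ℝ) < K ^ (q-1) := Real.rpow_pos_of_pos hK _
      set m : ℝ := min (1/(2*C)) (1/(2*C*K^(q-1))) with hm
      have hm0 : 0 < m := by
        apply lt_min <;> positivity
      set β : ℝ := min (1/2) (m ^ (1/(q-1))) with hβ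
      have hβ0 : 0 < β := lt_min (by norm_num) (Real.rpow_pos_of_pos hm0 _)
      have hβhalf : β ≤ 1/2 := min_le_left _ _
      have hβq1 : β ^ (q-1) ≤ m := by
        calc β ^ (q-1) ≤ (m ^ (1/(q-1))) ^ (q-1) :=
              Real.rpow_le_rpow hβ0.le (min_le_right _ _) hq1.le
          _ = m := by
              rw [← Real.rpow_mul hm0.le, one_div, inv_mul_cancel₀ (ne_of_gt hq1),
                Real.rpow_one]
      have hCm : C * m ≤ 1/2 := by
        have h1 : m ≤ 1/(2*C) := min_le_left _ _
        rw [le_div_iff₀ (by positivity)] at h1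
        nlinarith
      have hCmK : C * m * K^(q-1) ≤ 1/2 := by
        have h1 : m ≤ 1/(2*C*K^(q-1)) := min_le_right _ _
        rw [le_div_iff₀ (by positivity)] at h1
        nlinarith
      clear_value m β
      refine ⟨β, hβ0, by linarith, ?_⟩
      intro x hx y hy t ht hcond
      have hcond' : dist x y ^ n * (t + a y * t ^ q) ≤ K := hcond
      clear hcond
      have hβ1 : 0 ≤ β ^ (q-1) := Real.rpow_nonneg hβ0.le _
      have ht1 : 0 ≤ t ^ (q-1) := Real.rpow_nonneg ht.le _
      have hβle1 : β ^ (q-1) ≤ 1 :=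
        Real.rpow_le_one hβ0.le (by linarith) hq1.le
      have hCβ : C * β ^ (q-1) ≤ C * m := mul_le_mul_of_nonneg_left hβq1 hC.le
      have haxy : a x ≤ C * (a y + dist x y ^ ((n:ℝ)*(q-1))) := by
        have h := hi y hy x hx
        rwa [dist_comm] at h
      have hbq : (β*t)^q = β^(q-1)*β*(t^(q-1)*t) := by
        rw [Real.mul_rpow hβ0.le ht.le, rpow_split β hβ0, rpow_split t ht]
      show β*t + a x * (β*t)^q ≤ (t + a y * t^q) + 1
      rcases (dist_nonneg (x := x) (y := y)).eq_or_lt with hd0 | hd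
      · have hxy : x = y := dist_eq_zero.1 hd0.symm
        subst hxy
        rw [rpow_split t ht, hbq]
        have hax := ha0 x
        have hX : (0:ℝ) ≤ t^(q-1)*t := mul_nonneg ht1 ht.le
        have hs' : β^(q-1)*β ≤ 1/2 := by nlinarith
        have hs : β^(q-1)*β*(t^(q-1)*t) ≤ t^(q-1)*t := by
          nlinarith [hX, hs']
        have hs2 : a x * (β^(q-1)*β*(t^(q-1)*t)) ≤ a x * (t^(q-1)*t) :=
          mul_le_mul_of_nonneg_left hs hax
        nlinarith [mul_le_mul_of_nonneg_right hβhalf ht.le]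
      · set d := dist x y with hdd
        have haxy' : a x ≤ C * (a y + d ^ ((n:ℝ)*(q-1))) := haxy
        clear_value d
        clear haxy hdd
        have hdn : (0:ℝ) < d ^ n := pow_pos hd n
        have hdq : (0:ℝ) < d ^ ((n:ℝ)*(q-1)) := Real.rpow_pos_of_pos hd _
        have htK : t ≤ K / d^n := by
          rw [le_div_iff₀ hdn]
          have hexp : d^n*(t + a y*t^q) = d^n*t + d^n*(a y*t^q) := by ring
          have hnn2 : (0:ℝ) ≤ d^n*(a y*t^q) :=
            mul_nonneg hdn.le (mul_nonneg (ha0 y) (Real.rpow_nonneg ht.le q))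
          linarith [hcond', hexp, hnn2]
        have hkey : d ^ ((n:ℝ)*(q-1)) * t ^ (q-1) ≤ K^(q-1) := by
          have h1 : t ^ (q-1) ≤ (K/d^n) ^ (q-1) := Real.rpow_le_rpow ht.le htK hq1.le
          rw [Real.div_rpow hK.le (pow_nonneg hd.le n), hid d hd] at h1
          rw [le_div_iff₀ hdq] at h1
          linarith
        rw [rpow_split t ht, hbq]
        have e1 : a x * (β^(q-1)*β*(t^(q-1)*t)) ≤
            C*(a y + d ^ ((n:ℝ)*(q-1))) * (β^(q-1)*β*(t^(q-1)*t)) :=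
          mul_le_mul_of_nonneg_right haxy'
            (mul_nonneg (mul_nonneg hβ1 hβ0.le) (mul_nonneg ht1 ht.le))
        have f1 : (C*β^(q-1))*β*(a y*(t^(q-1)*t)) ≤ a y * (t^(q-1)*t) := by
          have g : (C*β^(q-1))*β ≤ 1 := by
            nlinarith [mul_nonneg hC.le hβ1]
          calc (C*β^(q-1))*β*(a y*(t^(q-1)*t)) ≤ 1*(a y*(t^(q-1)*t)) :=
                mul_le_mul_of_nonneg_right g
                  (mul_nonneg (ha0 y) (mul_nonneg ht1 ht.le))
            _ = a y*(t^(q-1)*t) := one_mul _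
        have f2 : (C*β^(q-1))*β*(d ^ ((n:ℝ)*(q-1))*t^(q-1))*t ≤ t/2 := by
          have g : C*β^(q-1)*K^(q-1) ≤ 1/2 := by
            have := mul_le_mul_of_nonneg_right hCβ hKq.le
            linarith
          have g2 : (C*β^(q-1))*(d ^ ((n:ℝ)*(q-1))*t^(q-1)) ≤ C*β^(q-1)*K^(q-1) :=
            mul_le_mul_of_nonneg_left hkey (mul_nonneg hC.le hβ1)
          have hu : (0:ℝ) ≤ (C*β^(q-1))*(d ^ ((n:ℝ)*(q-1))*t^(q-1)) :=
            mul_nonneg (mul_nonneg hC.le hβ1) (mul_nonneg hdq.le ht1)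
          have g3 : (C*β^(q-1))*β*(d ^ ((n:ℝ)*(q-1))*t^(q-1)) ≤ 1/2 := by
            nlinarith [hu, g2, g]
          nlinarith [mul_le_mul_of_nonneg_right g3 ht.le]
        nlinarith [e1, f1, f2, mul_le_mul_of_nonneg_right hβhalf ht.le]
    · -- modulus part
      intro K hK
      have hKq : (0:ℝ) ≤ K ^ (q-1) := Real.rpow_nonneg hK.le _
      obtain ⟨E, hEmod, hEbound⟩ := ratio_modulus Ω a q C hq hC hi hii
      obtain ⟨hEc, hEm, hE0, hEnn⟩ := hEmod
      refine ⟨fun d => K^(q-1) * E d, ⟨continuousOn_const.mul hEc,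
        fun s hs t' ht' hst => mul_le_mul_of_nonneg_left (hEm hs ht' hst) hKq,
        by show K^(q-1) * E 0 = 0; rw [hE0]; ring,
        fun r hr => mul_nonneg hKq (hEnn r hr)⟩, ?_⟩
      intro x hx y hy hrec t ht hcond
      have hcond' : dist x y ^ n * (t + a y * t ^ q) ≤ K := hcond
      clear hcond
      set w := K^(q-1) * E (dist x y) with hw
      have hw0 : 0 ≤ w := mul_nonneg hKq (hEnn _ dist_nonneg)
      have h1w : (0:ℝ) < 1 + w := by linarith
      show t/(1+w) + a x * (t/(1+w))^q ≤ (t + a y * t^q) + w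
      have hcases : a x = 0 ∨ a y = 0 := by
        rcases hrec with h | h
        · exact Or.inl ((recession_dp' a q hq x (ha0 x)).1 h)
        · exact Or.inr ((recession_dp' a q hq y (ha0 y)).1 h)
      have hlin : ∀ z : Eucl n, a z = 0 → a x = 0 →
          t/(1+w) + a x * (t/(1+w))^q ≤ (t + a z * t^q) + w := by
        intro z hz hax
        rw [hax, hz]
        have h5 : t/(1+w) ≤ t := div_le_self ht.le (by linarith)
        nlinarith
      rcases hcases with hax | hay
      · rw [hax]
        have h5 : t/(1+w) ≤ t := div_le_self ht.le (by linarith)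
        nlinarith [mul_nonneg (ha0 y) (Real.rpow_nonneg ht.le q)]
      · rcases (dist_nonneg (x := x) (y := y)).eq_or_lt with hd0 | hd
        · have hxy : x = y := dist_eq_zero.1 hd0.symm
          subst hxy
          exact hlin x hay hay
        · have hax := hEbound x hx y hy hay hd
          rw [hay] at hcond' ⊢
          set d := dist x y with hdd
          clear_value d
          have hdn : (0:ℝ) < d ^ n := pow_pos hd n
          have hdq : (0:ℝ) < d ^ ((n:ℝ)*(q-1)) := Real.rpow_pos_of_pos hd _
          have htK : t ≤ K / d^n := by
            rw [le_div_iff₀ hdn]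
            nlinarith [hcond']
          have ht1 : t ^ (q-1) ≤ K^(q-1) / d ^ ((n:ℝ)*(q-1)) := by
            have h1 : t ^ (q-1) ≤ (K/d^n) ^ (q-1) := Real.rpow_le_rpow ht.le htK hq1.le
            rwa [Real.div_rpow hK.le (pow_nonneg hd.le n), hid d hd] at h1
          have hkey : a x * t^(q-1) ≤ w := by
            have h2 : a x * t^(q-1) ≤
                (E d * d ^ ((n:ℝ)*(q-1))) * (K^(q-1)/d ^ ((n:ℝ)*(q-1))) :=
              mul_le_mul hax ht1 (Real.rpow_nonneg ht.le _)
                (mul_nonneg (hEnn d hd.le) hdq.le)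
            have h3 : (E d * d ^ ((n:ℝ)*(q-1))) * (K^(q-1)/d ^ ((n:ℝ)*(q-1)))
                = K^(q-1) * E d := by
              field_simp
            rw [hw]
            rw [h3] at h2
            exact h2
          have hdiv : (t/(1+w))^q = t^q/(1+w)^q := Real.div_rpow ht.le h1w.le q
          have e2 : a x * t^q ≤ w * t := by
            rw [rpow_split t ht]
            nlinarith [mul_le_mul_of_nonneg_right hkey ht.le]
          have e3 : (1+w) ≤ (1+w)^q := by
            nth_rewrite 1 [← Real.rpow_one (1+w)]
            exact Real.rpow_le_rpow_of_exponent_le (by linarith) hq.le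
          have e4 : a x * t^q/(1+w)^q ≤ w*t/(1+w) :=
            div_le_div₀ (mul_nonneg hw0 ht.le) e2 h1w e3
          have e5 : t/(1+w) + w*t/(1+w) = t := by
            field_simp
          have e6 : a x * (t^q/(1+w)^q) = a x * t^q/(1+w)^q := by ring
          rw [hdiv]
          nlinarith [e4, e5, e6, hw0]



end
end

section
/- Let Ω ⊆ ℝⁿ be a bounded open set, q > 1, a : Ω → [0,∞), and φ(x,t) = t + a(x)·t^q. Suppose there exists a modulus of continuity ω such that for all x, y ∈ Ω with a(y) = 0 and all t > 0 with t ≤ |x−y|^{−n}, one has φ(x, t/(1+ω(|x−y|))) ≤ t + ω(|x−y|). Then for every ε > 0 there is r > 0 such that a(x) ≤ ε·|x−y|^{n(q−1)} whenever x, y ∈ Ω, a(y) = 0 and 0 < |x−y| < r. -/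
open MeasureTheory Set Filter Topology
open scoped ENNReal NNReal

noncomputable section

/-- the restricted (VA1)-type inequality for the double-phase function implies
strong Hölder continuity of the weight on the set where it vanishes. -/
theorem statement17 {n : ℕ} (Ω : Set (Eucl n)) (hΩo : IsOpen Ω)
    (hΩb : Bornology.IsBounded Ω)
    (q : ℝ) (hq : 1 < q) (a : Eucl n → ℝ) (ha0 : ∀ x, 0 ≤ a x)
    (ω : ℝ → ℝ) (hω : IsModulus ω)
    (h : ∀ x ∈ Ω, ∀ y ∈ Ω, a y = 0 → ∀ t : ℝ, 0 < t → t * dist x y ^ n ≤ 1 →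
      t / (1 + ω (dist x y)) + a x * (t / (1 + ω (dist x y))) ^ q ≤ t + ω (dist x y)) :
    ∀ ε : ℝ, 0 < ε → ∃ r : ℝ, 0 < r ∧ ∀ x ∈ Ω, ∀ y ∈ Ω, a y = 0 →
      0 < dist x y → dist x y < r → a x ≤ ε * dist x y ^ ((n : ℝ) * (q - 1)) := by
  obtain ⟨hωc, hωm, hω0, hωnn⟩ := hω
  intro ε hε
  set f : ℝ → ℝ := fun s => ω s * (1 + ω s) ^ (q - 1) + ω s * ((1 + ω s) ^ (q - 1) * (1 + ω s)) * s ^ n with hf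
  have hωc0 : ContinuousWithinAt ω (Ici 0) 0 := hωc 0 Set.self_mem_Ici
  have hfc : ContinuousWithinAt f (Ici 0) 0 := by
    have h1 : ContinuousWithinAt (fun s => 1 + ω s) (Ici 0) 0 :=
      continuousWithinAt_const.add hωc0
    have h2 : ContinuousWithinAt (fun s => (1 + ω s) ^ (q - 1)) (Ici 0) 0 :=
      h1.rpow_const (by right; linarith)
    exact (hωc0.mul h2).add
      ((hωc0.mul (h2.mul h1)).mul (continuous_pow n).continuousWithinAt)
  have hf0 : f 0 = 0 := by simp [hf, hω0]
  have hev : f ⁻¹' (Iio ε) ∈ 𝓝[Ici 0] (0 : ℝ) :=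
    hfc (by rw [hf0]; exact Iio_mem_nhds hε)
  rw [Metric.mem_nhdsWithin_iff] at hev
  obtain ⟨r, hr0, hr⟩ := hev
  refine ⟨r, hr0, fun x hx y hy hay hd hdr => ?_⟩
  set d := dist x y with hdd
  have hd0 : (0:ℝ) ≤ d := dist_nonneg
  have hfd : f d < ε := hr ⟨by simpa [Real.dist_eq, abs_of_nonneg hd0] using hdr, hd0⟩
  set w := ω d with hwdef
  have hw0 : 0 ≤ w := hωnn d hd0
  have hD : 0 < d ^ n := pow_pos hd n
  set t := (d ^ n)⁻¹ with ht
  have ht0 : 0 < t := inv_pos.mpr hD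
  have htD : t * d ^ n ≤ 1 := by rw [ht]; rw [inv_mul_cancel₀ hD.ne']
  have key := h x hx y hy hay t ht0 htD
  have h1w : 0 < 1 + w := by linarith
  set c := t / (1 + w) with hc
  have hc0 : 0 < c := div_pos ht0 h1w
  have htc : t = (1 + w) * c := by rw [hc]; field_simp
  have key' : c + a x * c ^ q ≤ t + w := key
  have key2 : a x * c ^ q ≤ w * (c + 1) := by
    have hrw : t + w - c = w * (c + 1) := by rw [htc]; ring
    linarith [key']
  set A := (1 + w) ^ (q - 1) with hA
  have hA0 : 0 < A := Real.rpow_pos_of_pos h1w _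
  have hPq : (1 + w) ^ q = A * (1 + w) := by
    have h2 := Real.rpow_add h1w (q - 1) 1
    rw [Real.rpow_one] at h2
    have h3 : q - 1 + 1 = q := by ring
    rw [h3] at h2
    rw [hA, h2]
  have hcq : c ^ q = t ^ q / (A * (1 + w)) := by
    rw [hc, Real.div_rpow ht0.le h1w.le, hPq]
  have ht' : t = d ^ (-(n : ℝ)) := by
    rw [ht, ← Real.rpow_natCast d n, ← Real.rpow_neg hd0]
  have hEt : d ^ ((n : ℝ) * (q - 1)) * t ^ q = t := by
    rw [ht', ← Real.rpow_mul hd0, ← Real.rpow_add hd]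
    congr 1
    ring
  have hdn : (d : ℝ) ^ n = t⁻¹ := by rw [ht, inv_inv]
  have hfd' : f d = w * A + w * (A * (1 + w)) * d ^ n := by
    simp only [hf, ← hwdef, ← hA]
  have hwc : w * (c + 1) = f d * (t / (A * (1 + w))) := by
    rw [hfd', hdn, hc]
    field_simp
  have hcq0 : 0 < c ^ q := Real.rpow_pos_of_pos hc0 q
  have hfin : a x * c ^ q ≤ ε * d ^ ((n : ℝ) * (q - 1)) * c ^ q := by
    calc a x * c ^ q ≤ w * (c + 1) := key2
      _ = f d * (t / (A * (1 + w))) := hwc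
      _ ≤ ε * (t / (A * (1 + w))) := by
          apply mul_le_mul_of_nonneg_right hfd.le
          positivity
      _ = ε * d ^ ((n : ℝ) * (q - 1)) * c ^ q := by
          rw [hcq, div_eq_mul_inv, div_eq_mul_inv]
          conv_lhs => rw [← hEt]
          ring
  exact le_of_mul_le_mul_right hfin hcq0

end
end

section
/- Let Ω ⊆ ℝⁿ be a bounded open set with Lipschitz boundary and φ a continuous convex Φ-function, and let f ∈ L²(Ω) and λ > 0. Then the functional ROF_φ(v) = λ·E_φ(v) + (1/2)·∫_Ω |v − f|² dx has a unique minimiser u over L²(Ω); moreover, u ∈ L²(Ω) is the minimiser if and only if f − u ∈ λ·∂E_φ(u), i.e. E_φ(u) < ∞ and λ·E_φ(v) ≥ λ·E_φ(u) + ∫_Ω (f − u)·(v − u) dx for all v ∈ L²(Ω). -/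
open MeasureTheory Set Filter Topology
open scoped ENNReal NNReal

noncomputable section

namespace S19

open ENNReal

lemma testVF_zero {n : ℕ} (Ω : Set (Eucl n)) : TestVF Ω (fun _ => (0 : Eucl n)) := by
  refine ⟨contDiff_const, ?_, ?_⟩
  · have : tsupport (fun _ : Eucl n => (0 : Eucl n)) = ∅ := by
      simp [tsupport, Function.support]
    unfold HasCompactSupport
    rw [this]; exact isCompact_empty
  · have : tsupport (fun _ : Eucl n => (0 : Eucl n)) = ∅ := by
      simp [tsupport, Function.support]
    rw [this]; exact empty_subset _

instance tvNonempty {n : ℕ} (Ω : Set (Eucl n)) :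
    Nonempty {ξ : Eucl n → Eucl n // TestVF Ω ξ} := ⟨⟨_, testVF_zero Ω⟩⟩

lemma mul_integrable {α : Type*} [MeasurableSpace α] {μ : Measure α} {u v : α → ℝ}
    (hu : MemLp u 2 μ) (hv : MemLp v 2 μ) : Integrable (fun x => u x * v x) μ := by
  have h := L2.integrable_inner (𝕜 := ℝ) (hu.toLp u) (hv.toLp v)
  have hc : (fun x => (inner ℝ ((hu.toLp u) x) ((hv.toLp v) x) : ℝ)) =ᵐ[μ]
      (fun x => u x * v x) := by
    filter_upwards [hu.coeFn_toLp, hv.coeFn_toLp] with x h1 h2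
    simp [h1, h2, real_inner_eq_re_inner, mul_comm]
  exact h.congr hc

lemma divg_continuous {n : ℕ} {ξ : Eucl n → Eucl n} (hξ : ContDiff ℝ 1 ξ) :
    Continuous (divg ξ) := by
  have h1 : Continuous (fun x => fderiv ℝ ξ x) := hξ.continuous_fderiv one_ne_zero
  refine continuous_finset_sum _ (fun i _ => ?_)
  have h2 : Continuous fun x => fderiv ℝ ξ x (EuclideanSpace.single i 1) :=
    (ContinuousLinearMap.apply ℝ (Eucl n) (EuclideanSpace.single i 1)).continuous.comp h1
  exact (EuclideanSpace.proj i).continuous.comp h2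

lemma divg_support {n : ℕ} {ξ : Eucl n → Eucl n} :
    Function.support (divg ξ) ⊆ tsupport ξ := by
  intro x hx
  by_contra hxt
  apply hx
  have h0 : ξ =ᶠ[nhds x] (fun _ => 0) := notMem_tsupport_iff_eventuallyEq.mp hxt
  have : fderiv ℝ ξ x = fderiv ℝ (fun _ => (0 : Eucl n)) x := h0.fderiv_eq
  simp [divg, this]

lemma divg_memL2 {n : ℕ} {Ω : Set (Eucl n)} {ξ : Eucl n → Eucl n} (hξ : TestVF Ω ξ) :
    MemLp (divg ξ) 2 (volume.restrict Ω) := by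
  have hc : Continuous (divg ξ) := divg_continuous hξ.1
  have hcs : HasCompactSupport (divg ξ) :=
    HasCompactSupport.intro hξ.2.1 (fun x hx => by
      by_contra h
      exact hx (closure_minimal divg_support isClosed_closure (subset_closure h)))
  exact (hc.memLp_of_hasCompactSupport (p := 2) hcs).restrict Ω

lemma lint_sq_eq {α : Type*} [MeasurableSpace α] (μ : Measure α) (g : α → ℝ) :
    ∫⁻ x, ENNReal.ofReal (g x ^ 2) ∂μ = eLpNorm g 2 μ ^ (2 : ℝ) := by
  rw [eLpNorm_eq_lintegral_rpow_enorm_toReal (by norm_num) (by norm_num)]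
  rw [← ENNReal.rpow_mul]
  have hp : ENNReal.toReal 2 = (2:ℝ) := by norm_num
  rw [hp]
  norm_num
  refine lintegral_congr fun x => ?_
  rw [Real.enorm_eq_ofReal_abs, ← ENNReal.ofReal_pow (abs_nonneg _), sq_abs]

lemma tv_congr {n : ℕ} (Ω : Set (Eucl n)) (φ : Eucl n → ℝ → ℝ) {u v : Eucl n → ℝ}
    (h : u =ᵐ[volume.restrict Ω] v) : TVphi Ω φ u = TVphi Ω φ v := by
  refine iSup_congr fun ξ => ?_
  congr 2
  refine integral_congr_ae ?_
  filter_upwards [h] with x hx; rw [hx]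

lemma tv_zero {n : ℕ} (Ω : Set (Eucl n)) (φ : Eucl n → ℝ → ℝ) :
    TVphi Ω φ (fun _ => (0:ℝ)) = 0 := by
  rw [TVphi]
  refine le_antisymm (iSup_le fun ξ => ?_) zero_le
  simp [zero_tsub]

lemma tv_convex {n : ℕ} (Ω : Set (Eucl n)) (φ : Eucl n → ℝ → ℝ) {u v : Eucl n → ℝ}
    (hu : MemLp u 2 (volume.restrict Ω)) (hv : MemLp v 2 (volume.restrict Ω))
    {t : ℝ} (h0 : 0 ≤ t) (h1 : t ≤ 1) :
    TVphi Ω φ (fun x => (1 - t) * u x + t * v x) ≤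
      ENNReal.ofReal (1 - t) * TVphi Ω φ u + ENNReal.ofReal t * TVphi Ω φ v := by
  refine iSup_le fun ξ => ?_
  set c : ℝ≥0∞ := ∫⁻ x in Ω, phiStar φ x ‖ξ.1 x‖ with hc
  have hiu : Integrable (fun x => u x * divg ξ.1 x) (volume.restrict Ω) :=
    mul_integrable hu (divg_memL2 ξ.2)
  have hiv : Integrable (fun x => v x * divg ξ.1 x) (volume.restrict Ω) :=
    mul_integrable hv (divg_memL2 ξ.2)
  have hsplit : (∫ x in Ω, ((1 - t) * u x + t * v x) * divg ξ.1 x) =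
      (1 - t) * (∫ x in Ω, u x * divg ξ.1 x) + t * (∫ x in Ω, v x * divg ξ.1 x) := by
    rw [← integral_const_mul, ← integral_const_mul,
      ← integral_add (hiu.const_mul _) (hiv.const_mul _)]
    refine integral_congr_ae (Eventually.of_forall fun x => by ring)
  rw [hsplit]
  have hof : ENNReal.ofReal ((1 - t) * (∫ x in Ω, u x * divg ξ.1 x)
        + t * (∫ x in Ω, v x * divg ξ.1 x)) ≤
      ENNReal.ofReal (1 - t) * ENNReal.ofReal (∫ x in Ω, u x * divg ξ.1 x)
        + ENNReal.ofReal t * ENNReal.ofReal (∫ x in Ω, v x * divg ξ.1 x) := by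
    refine le_trans (ENNReal.ofReal_add_le) (add_le_add ?_ ?_) <;>
      rw [← ENNReal.ofReal_mul (by linarith)]
  have hcsplit : c = ENNReal.ofReal (1 - t) * c + ENNReal.ofReal t * c := by
    rw [← add_mul, ← ENNReal.ofReal_add (by linarith) h0]
    norm_num
  calc ENNReal.ofReal ((1 - t) * (∫ x in Ω, u x * divg ξ.1 x)
        + t * (∫ x in Ω, v x * divg ξ.1 x)) - c
      ≤ (ENNReal.ofReal (1 - t) * ENNReal.ofReal (∫ x in Ω, u x * divg ξ.1 x)
        + ENNReal.ofReal t * ENNReal.ofReal (∫ x in Ω, v x * divg ξ.1 x))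
        - (ENNReal.ofReal (1 - t) * c + ENNReal.ofReal t * c) := by
        rw [← hcsplit]; exact tsub_le_tsub_right hof c
    _ ≤ (ENNReal.ofReal (1 - t) * ENNReal.ofReal (∫ x in Ω, u x * divg ξ.1 x)
          - ENNReal.ofReal (1 - t) * c)
        + (ENNReal.ofReal t * ENNReal.ofReal (∫ x in Ω, v x * divg ξ.1 x)
          - ENNReal.ofReal t * c) := by
        rw [tsub_le_iff_right]
        calc _ ≤ ((ENNReal.ofReal (1 - t) * ENNReal.ofReal (∫ x in Ω, u x * divg ξ.1 x)
              - ENNReal.ofReal (1 - t) * c) + ENNReal.ofReal (1 - t) * c)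
            + ((ENNReal.ofReal t * ENNReal.ofReal (∫ x in Ω, v x * divg ξ.1 x)
              - ENNReal.ofReal t * c) + ENNReal.ofReal t * c) :=
              add_le_add le_tsub_add le_tsub_add
          _ = _ := by ring
    _ ≤ ENNReal.ofReal (1 - t) * (ENNReal.ofReal (∫ x in Ω, u x * divg ξ.1 x) - c)
        + ENNReal.ofReal t * (ENNReal.ofReal (∫ x in Ω, v x * divg ξ.1 x) - c) := by
        gcongr <;>
        · rw [tsub_le_iff_right, ← mul_add]
          exact mul_le_mul_right le_tsub_add _
    _ ≤ ENNReal.ofReal (1 - t) * TVphi Ω φ u + ENNReal.ofReal t * TVphi Ω φ v := by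
        gcongr <;> exact le_iSup_of_le ξ le_rfl

lemma q_expand {α : Type*} [MeasurableSpace α] {μ : Measure α} {f p g : α → ℝ}
    (hf : MemLp f 2 μ) (hp : MemLp p 2 μ) (hg : MemLp g 2 μ) (t : ℝ) :
    ∫ x, (p x + t * g x - f x) ^ 2 ∂μ =
      (∫ x, (p x - f x) ^ 2 ∂μ) + 2 * t * (∫ x, (p x - f x) * g x ∂μ)
        + t ^ 2 * ∫ x, g x * g x ∂μ := by
  have hs : MemLp (fun x => p x - f x) 2 μ := hp.sub hf
  have i1 : Integrable (fun x => (p x - f x) * (p x - f x)) μ := mul_integrable hs hs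
  have i2 : Integrable (fun x => (2 * t) * ((p x - f x) * g x)) μ :=
    (mul_integrable hs hg).const_mul _
  have i3 : Integrable (fun x => t ^ 2 * (g x * g x)) μ := (mul_integrable hg hg).const_mul _
  have i23 : Integrable (fun x => 2 * t * ((p x - f x) * g x) + t ^ 2 * (g x * g x)) μ :=
    i2.add i3
  have e1 : ∀ x, (p x + t * g x - f x) ^ 2 =
      (p x - f x) * (p x - f x) + ((2 * t) * ((p x - f x) * g x) + t ^ 2 * (g x * g x)) :=
    fun x => by ring
  rw [integral_congr_ae (Eventually.of_forall e1), integral_add i1 i23,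
    integral_add i2 i3, integral_const_mul, integral_const_mul]
  have : ∀ x, (p x - f x) * (p x - f x) = (p x - f x) ^ 2 := fun x => (sq _).symm
  rw [integral_congr_ae (Eventually.of_forall this)]
  ring

lemma qe_parallelogram {α : Type*} [MeasurableSpace α] {μ : Measure α} {f u v : α → ℝ}
    (hf : MemLp f 2 μ) (hu : MemLp u 2 μ) (hv : MemLp v 2 μ) :
    (∫⁻ x, ENNReal.ofReal (((1 - (2⁻¹:ℝ)) * u x + 2⁻¹ * v x - f x) ^ 2) ∂μ)
      + (∫⁻ x, ENNReal.ofReal ((u x - v x) ^ 2) ∂μ) / 4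
    = (∫⁻ x, ENNReal.ofReal ((u x - f x) ^ 2) ∂μ) / 2
      + (∫⁻ x, ENNReal.ofReal ((v x - f x) ^ 2) ∂μ) / 2 := by
  have hmeas : ∀ (a b : α → ℝ), AEMeasurable a μ → AEMeasurable b μ →
      AEMeasurable (fun x => ENNReal.ofReal ((a x - b x) ^ 2)) μ := fun a b ha hb =>
    ((ha.sub hb).pow_const 2).ennreal_ofReal
  have hau := hu.aestronglyMeasurable.aemeasurable
  have hav := hv.aestronglyMeasurable.aemeasurable
  have haf := hf.aestronglyMeasurable.aemeasurable
  have key : ∀ x, ENNReal.ofReal (((1 - (2⁻¹:ℝ)) * u x + 2⁻¹ * v x - f x) ^ 2)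
        + 4⁻¹ * ENNReal.ofReal ((u x - v x) ^ 2)
      = 2⁻¹ * ENNReal.ofReal ((u x - f x) ^ 2) + 2⁻¹ * ENNReal.ofReal ((v x - f x) ^ 2) := by
    intro x
    rw [show (4⁻¹ : ℝ≥0∞) = ENNReal.ofReal (4⁻¹ : ℝ) by
        rw [ENNReal.ofReal_inv_of_pos (by norm_num)]; norm_num,
      show (2⁻¹ : ℝ≥0∞) = ENNReal.ofReal (2⁻¹ : ℝ) by
        rw [ENNReal.ofReal_inv_of_pos (by norm_num)]; norm_num]
    rw [← ENNReal.ofReal_mul (by norm_num), ← ENNReal.ofReal_mul (by norm_num),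
      ← ENNReal.ofReal_mul (by norm_num),
      ← ENNReal.ofReal_add (sq_nonneg _) (by positivity),
      ← ENNReal.ofReal_add (by positivity) (by positivity)]
    congr 1
    ring
  have hL : (∫⁻ x, ENNReal.ofReal (((1 - (2⁻¹:ℝ)) * u x + 2⁻¹ * v x - f x) ^ 2) ∂μ)
        + 4⁻¹ * (∫⁻ x, ENNReal.ofReal ((u x - v x) ^ 2) ∂μ)
      = 2⁻¹ * (∫⁻ x, ENNReal.ofReal ((u x - f x) ^ 2) ∂μ)
        + 2⁻¹ * (∫⁻ x, ENNReal.ofReal ((v x - f x) ^ 2) ∂μ) := by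
    rw [← lintegral_const_mul' _ _ (by norm_num), ← lintegral_const_mul' _ _ (by norm_num),
      ← lintegral_const_mul' _ _ (by norm_num),
      ← lintegral_add_left' (show AEMeasurable (fun x => ENNReal.ofReal
          (((1 - (2⁻¹:ℝ)) * u x + 2⁻¹ * v x - f x) ^ 2)) μ from
          ((hau.const_mul _).add (hav.const_mul _) |>.sub haf).pow_const 2
          |>.ennreal_ofReal),
      ← lintegral_add_left' ((hmeas u f hau haf).const_mul _)]
    exact lintegral_congr key
  calc _ = (∫⁻ x, ENNReal.ofReal (((1 - (2⁻¹:ℝ)) * u x + 2⁻¹ * v x - f x) ^ 2) ∂μ)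
        + 4⁻¹ * (∫⁻ x, ENNReal.ofReal ((u x - v x) ^ 2) ∂μ) := by
        rw [div_eq_mul_inv]; ring
    _ = _ := by rw [hL, div_eq_mul_inv, div_eq_mul_inv]; ring

lemma qe_lp {α : Type*} [MeasurableSpace α] {μ : Measure α} {f : α → ℝ}
    (hf : MemLp f 2 μ) (W : Lp ℝ 2 μ) :
    ∫⁻ x, ENNReal.ofReal ((W x - f x) ^ 2) ∂μ
      = ENNReal.ofReal (‖W - hf.toLp f‖ ^ 2) := by
  have h1 : eLpNorm (fun x => W x - f x) 2 μ = eLpNorm (⇑(W - hf.toLp f)) 2 μ := by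
    refine (eLpNorm_congr_ae ?_).symm
    filter_upwards [Lp.coeFn_sub W (hf.toLp f), hf.coeFn_toLp] with x hx hfx
    rw [hx]; simp [hfx]
  have h2 : eLpNorm (⇑(W - hf.toLp f)) 2 μ = ENNReal.ofReal ‖W - hf.toLp f‖ := by
    rw [Lp.norm_def, ENNReal.ofReal_toReal (Lp.eLpNorm_lt_top _).ne]
  rw [lint_sq_eq μ (fun x => W x - f x), h1, h2,
    ENNReal.ofReal_rpow_of_nonneg (norm_nonneg _) (by norm_num)]
  congr 1
  rw [← Real.rpow_natCast ‖W - hf.toLp f‖ 2]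
  norm_num

lemma qe_ofReal {α : Type*} [MeasurableSpace α] {μ : Measure α} {f v : α → ℝ}
    (hf : MemLp f 2 μ) (hv : MemLp v 2 μ) :
    ∫⁻ x, ENNReal.ofReal ((v x - f x) ^ 2) ∂μ
      = ENNReal.ofReal (∫ x, (v x - f x) ^ 2 ∂μ) := by
  have hs : MemLp (fun x => v x - f x) 2 μ := hv.sub hf
  have hi : Integrable (fun x => (v x - f x) ^ 2) μ :=
    (mul_integrable hs hs).congr (Eventually.of_forall fun x => (sq _).symm)
  exact (ofReal_integral_eq_lintegral_ofReal hi
    (Eventually.of_forall fun x => sq_nonneg _)).symm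

end S19

namespace S19

lemma div_div_aux (a : ℝ≥0∞) : a / 2 / 2 = a / 4 := by
  rw [div_eq_mul_inv, div_eq_mul_inv, div_eq_mul_inv, mul_assoc]
  congr 1
  rw [show (4:ℝ≥0∞) = 2 * 2 by norm_num,
    ENNReal.mul_inv (Or.inl (by norm_num)) (Or.inl (by norm_num))]

lemma div4_div2_aux (a : ℝ≥0∞) : a / 4 / 2 = a / 8 := by
  rw [div_eq_mul_inv, div_eq_mul_inv, div_eq_mul_inv, mul_assoc]
  congr 1
  rw [show (8:ℝ≥0∞) = 4 * 2 by norm_num,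
    ENNReal.mul_inv (Or.inl (by norm_num)) (Or.inl (by norm_num))]

lemma strong_convexity {n : ℕ} (Ω : Set (Eucl n)) (φ : Eucl n → ℝ → ℝ) {lam : ℝ}
    {f u v : Eucl n → ℝ} (hf : MemLp f 2 (volume.restrict Ω))
    (hu : MemLp u 2 (volume.restrict Ω)) (hv : MemLp v 2 (volume.restrict Ω)) :
    ROFfun Ω φ lam f (fun x => (1 - (2⁻¹:ℝ)) * u x + 2⁻¹ * v x)
      + (∫⁻ x in Ω, ENNReal.ofReal ((u x - v x) ^ 2)) / 8
    ≤ ROFfun Ω φ lam f u / 2 + ROFfun Ω φ lam f v / 2 := by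
  set lamE := ENNReal.ofReal lam with hlamE
  set Qu := ∫⁻ x in Ω, ENNReal.ofReal ((u x - f x) ^ 2) with hQu
  set Qv := ∫⁻ x in Ω, ENNReal.ofReal ((v x - f x) ^ 2) with hQv
  set Qm := ∫⁻ x in Ω, ENNReal.ofReal (((1 - (2⁻¹:ℝ)) * u x + 2⁻¹ * v x - f x) ^ 2) with hQm
  set D := ∫⁻ x in Ω, ENNReal.ofReal ((u x - v x) ^ 2) with hD
  have hpar : Qm + D / 4 = Qu / 2 + Qv / 2 := qe_parallelogram hf hu hv
  have htv := tv_convex Ω φ hu hv (t := (2⁻¹:ℝ)) (by norm_num) (by norm_num)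
  have h12 : ENNReal.ofReal ((1:ℝ) - 2⁻¹) = 2⁻¹ ∧ ENNReal.ofReal ((2⁻¹:ℝ)) = 2⁻¹ := by
    constructor
    · rw [show ((1:ℝ) - 2⁻¹) = 2⁻¹ by norm_num, ENNReal.ofReal_inv_of_pos (by norm_num)]
      norm_num
    · rw [ENNReal.ofReal_inv_of_pos (by norm_num)]; norm_num
  rw [h12.1, h12.2] at htv
  have htv' : TVphi Ω φ (fun x => (1 - (2⁻¹:ℝ)) * u x + 2⁻¹ * v x) ≤
      TVphi Ω φ u / 2 + TVphi Ω φ v / 2 := by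
    rw [div_eq_mul_inv, div_eq_mul_inv]
    calc _ ≤ 2⁻¹ * TVphi Ω φ u + 2⁻¹ * TVphi Ω φ v := htv
      _ = _ := by ring
  have hQside : Qm / 2 + D / 8 = Qu / 4 + Qv / 4 := by
    have h2 := congrArg (· / 2) hpar
    rw [ENNReal.add_div, ENNReal.add_div, div_div_aux, div_div_aux, div4_div2_aux] at h2
    exact h2
  show lamE * TVphi Ω φ (fun x => (1 - (2⁻¹:ℝ)) * u x + 2⁻¹ * v x) + Qm / 2 + D / 8 ≤
    (lamE * TVphi Ω φ u + Qu / 2) / 2 + (lamE * TVphi Ω φ v + Qv / 2) / 2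
  calc lamE * TVphi Ω φ (fun x => (1 - (2⁻¹:ℝ)) * u x + 2⁻¹ * v x) + Qm / 2 + D / 8
      = lamE * TVphi Ω φ (fun x => (1 - (2⁻¹:ℝ)) * u x + 2⁻¹ * v x) + (Qm / 2 + D / 8) := by
        rw [add_assoc]
    _ ≤ lamE * (TVphi Ω φ u / 2 + TVphi Ω φ v / 2) + (Qu / 4 + Qv / 4) := by
        rw [hQside]; gcongr
    _ = ((lamE * TVphi Ω φ u) / 2 + Qu / 4) + ((lamE * TVphi Ω φ v) / 2 + Qv / 4) := by
        rw [mul_add, mul_div_assoc, mul_div_assoc]; ring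
    _ = _ := by
        rw [ENNReal.add_div, ENNReal.add_div, div_div_aux, div_div_aux]

end S19

set_option maxHeartbeats 2000000 in
/-- existence and (a.e.) uniqueness of the minimiser of the ROF_φ functional,
and the Euler–Lagrange characterisation via the subdifferential of E_φ. -/
theorem statement19 {n : ℕ} (hn : 1 ≤ n) (Ω : Set (Eucl n)) (hΩo : IsOpen Ω)
    (hΩb : Bornology.IsBounded Ω) (hΩl : HasLipschitzBoundary n Ω)
    (φ : Eucl n → ℝ → ℝ) (hφ : IsPhiFunction Ω φ)
    (f : Eucl n → ℝ) (hf : MemLp f 2 (volume.restrict Ω)) (lam : ℝ) (hlam : 0 < lam) :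
    ∃ u : Eucl n → ℝ, MemLp u 2 (volume.restrict Ω) ∧
      (∀ v, MemLp v 2 (volume.restrict Ω) → ROFfun Ω φ lam f u ≤ ROFfun Ω φ lam f v) ∧
      (∀ u', MemLp u' 2 (volume.restrict Ω) →
        (∀ v, MemLp v 2 (volume.restrict Ω) →
          ROFfun Ω φ lam f u' ≤ ROFfun Ω φ lam f v) →
        u' =ᵐ[volume.restrict Ω] u) ∧
      (∀ u', MemLp u' 2 (volume.restrict Ω) →
        ((∀ v, MemLp v 2 (volume.restrict Ω) →
            ROFfun Ω φ lam f u' ≤ ROFfun Ω φ lam f v) ↔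
          (TVphi Ω φ u' < ⊤ ∧ ∀ v, MemLp v 2 (volume.restrict Ω) → TVphi Ω φ v < ⊤ →
            lam * (TVphi Ω φ u').toReal + ∫ x in Ω, (f x - u' x) * (v x - u' x) ≤
              lam * (TVphi Ω φ v).toReal))) := by
  classical
  have hμ := volume.restrict Ω
  -- zero function
  have h0m : MemLp (fun _ : Eucl n => (0:ℝ)) 2 (volume.restrict Ω) := MemLp.zero'
  have hlamE0 : (ENNReal.ofReal lam) ≠ 0 := (ENNReal.ofReal_pos.2 hlam).ne'
  have hQr0 : ∀ v : Eucl n → ℝ, (0:ℝ) ≤ ∫ x in Ω, (v x - f x) ^ 2 :=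
    fun v => integral_nonneg fun x => sq_nonneg _
  have hQfin : ∀ v : Eucl n → ℝ, MemLp v 2 (volume.restrict Ω) →
      (∫⁻ x in Ω, ENNReal.ofReal ((v x - f x) ^ 2)) < ⊤ := by
    intro v hv
    rw [S19.lint_sq_eq (volume.restrict Ω) (fun x => v x - f x)]
    exact ENNReal.rpow_lt_top_of_nonneg (by norm_num) (hv.sub hf).eLpNorm_lt_top.ne
  have hFtop : ∀ v : Eucl n → ℝ, TVphi Ω φ v = ⊤ → ROFfun Ω φ lam f v = ⊤ := by
    intro v hv
    show ENNReal.ofReal lam * TVphi Ω φ v + _ = ⊤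
    rw [hv, ENNReal.mul_top hlamE0, top_add]
  have hFfin : ∀ v : Eucl n → ℝ, MemLp v 2 (volume.restrict Ω) → TVphi Ω φ v < ⊤ →
      ROFfun Ω φ lam f v < ⊤ := by
    intro v hv htv
    show ENNReal.ofReal lam * TVphi Ω φ v + (∫⁻ x in Ω, ENNReal.ofReal ((v x - f x) ^ 2)) / 2 < ⊤
    exact ENNReal.add_lt_top.mpr ⟨ENNReal.mul_lt_top ENNReal.ofReal_lt_top htv,
      lt_of_le_of_lt (ENNReal.half_le_self) (hQfin v hv)⟩
  have hFreal : ∀ v : Eucl n → ℝ, MemLp v 2 (volume.restrict Ω) → TVphi Ω φ v < ⊤ →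
      ROFfun Ω φ lam f v = ENNReal.ofReal (lam * (TVphi Ω φ v).toReal
        + (∫ x in Ω, (v x - f x) ^ 2) / 2) := by
    intro v hv htv
    show ENNReal.ofReal lam * TVphi Ω φ v + (∫⁻ x in Ω, ENNReal.ofReal ((v x - f x) ^ 2)) / 2 = _
    rw [S19.qe_ofReal hf hv,
      ENNReal.ofReal_add (mul_nonneg hlam.le ENNReal.toReal_nonneg)
        (by linarith [hQr0 v]),
      ENNReal.ofReal_mul hlam.le, ENNReal.ofReal_toReal htv.ne,
      ENNReal.ofReal_div_of_pos (by norm_num)]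
    norm_num
  have htv0 : TVphi Ω φ (fun _ : Eucl n => (0:ℝ)) = 0 := S19.tv_zero Ω φ
  have hF0 : ROFfun Ω φ lam f (fun _ : Eucl n => (0:ℝ)) < ⊤ :=
    hFfin _ h0m (by rw [htv0]; exact ENNReal.zero_lt_top)
  -- the infimum
  set m := ⨅ p : {v : Eucl n → ℝ // MemLp v 2 (volume.restrict Ω)}, ROFfun Ω φ lam f p.1
    with hmdef
  have hm_le' : ∀ p : {v : Eucl n → ℝ // MemLp v 2 (volume.restrict Ω)},
      m ≤ ROFfun Ω φ lam f p.1 := fun p => iInf_le _ p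
  have hm_le : m ≤ ROFfun Ω φ lam f (fun _ : Eucl n => (0:ℝ)) := hm_le' ⟨_, h0m⟩
  have hm_ne : m ≠ ⊤ := (hm_le.trans_lt hF0).ne
  -- minimizing sequence
  have hex : ∀ k : ℕ, ∃ p : {v : Eucl n → ℝ // MemLp v 2 (volume.restrict Ω)},
      ROFfun Ω φ lam f p.1 ≤ m + ENNReal.ofReal (1 / ((k:ℝ) + 1)) := by
    intro k
    have hpos : (0:ℝ) < 1 / ((k:ℝ) + 1) := by positivity
    have hlt : m < m + ENNReal.ofReal (1 / ((k:ℝ) + 1)) :=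
      ENNReal.lt_add_right hm_ne (ENNReal.ofReal_pos.2 hpos).ne'
    obtain ⟨p, hp⟩ := iInf_lt_iff.mp hlt
    exact ⟨p, hp.le⟩
  choose seq hseq using hex
  -- Cauchy estimate
  have hLbound : ∀ j k : ℕ,
      (∫⁻ x in Ω, ENNReal.ofReal (((seq j).1 x - (seq k).1 x) ^ 2))
        ≤ 8 * (ENNReal.ofReal (1 / ((j:ℝ) + 1)) / 2 + ENNReal.ofReal (1 / ((k:ℝ) + 1)) / 2) := by
    intro j k
    set L := ∫⁻ x in Ω, ENNReal.ofReal (((seq j).1 x - (seq k).1 x) ^ 2) with hLdef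
    have hmid : MemLp (fun x => (1 - (2⁻¹:ℝ)) * (seq j).1 x + 2⁻¹ * (seq k).1 x) 2
        (volume.restrict Ω) := ((seq j).2.const_mul _).add ((seq k).2.const_mul _)
    have h1 : m + L / 8 ≤ ROFfun Ω φ lam f (seq j).1 / 2 + ROFfun Ω φ lam f (seq k).1 / 2 := by
      calc m + L / 8
          ≤ ROFfun Ω φ lam f (fun x => (1 - (2⁻¹:ℝ)) * (seq j).1 x + 2⁻¹ * (seq k).1 x)
            + L / 8 := by
              gcongr
              exact hm_le' ⟨_, hmid⟩
        _ ≤ _ := S19.strong_convexity Ω φ hf (seq j).2 (seq k).2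
    have h2 : ROFfun Ω φ lam f (seq j).1 / 2 + ROFfun Ω φ lam f (seq k).1 / 2
        ≤ m + (ENNReal.ofReal (1 / ((j:ℝ) + 1)) / 2 + ENNReal.ofReal (1 / ((k:ℝ) + 1)) / 2) := by
      calc ROFfun Ω φ lam f (seq j).1 / 2 + ROFfun Ω φ lam f (seq k).1 / 2
          ≤ (m + ENNReal.ofReal (1 / ((j:ℝ) + 1))) / 2
            + (m + ENNReal.ofReal (1 / ((k:ℝ) + 1))) / 2 := by
            gcongr <;> exact hseq _
        _ = m / 2 + m / 2 + (ENNReal.ofReal (1 / ((j:ℝ) + 1)) / 2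
            + ENNReal.ofReal (1 / ((k:ℝ) + 1)) / 2) := by
            rw [ENNReal.add_div, ENNReal.add_div]; ring
        _ = _ := by rw [ENNReal.add_halves]
    have h3 : L / 8 ≤ ENNReal.ofReal (1 / ((j:ℝ) + 1)) / 2
        + ENNReal.ofReal (1 / ((k:ℝ) + 1)) / 2 :=
      (ENNReal.add_le_add_iff_left hm_ne).mp (h1.trans h2)
    calc L = 8 * (L / 8) := (ENNReal.mul_div_cancel' (by norm_num) (by norm_num)).symm
      _ ≤ _ := by gcongr
  -- the sequence in L²
  set U : ℕ → Lp ℝ 2 (volume.restrict Ω) := fun k => ((seq k).2.toLp _) with hUdef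
  have heL : ∀ j k : ℕ, eLpNorm ((seq j).1 - (seq k).1) 2 (volume.restrict Ω)
      = (∫⁻ x in Ω, ENNReal.ofReal (((seq j).1 x - (seq k).1 x) ^ 2)) ^ (2⁻¹:ℝ) := by
    intro j k
    have he : eLpNorm ((seq j).1 - (seq k).1) 2 (volume.restrict Ω)
        = eLpNorm (fun x => (seq j).1 x - (seq k).1 x) 2 (volume.restrict Ω) :=
      eLpNorm_congr_ae (Eventually.of_forall fun x => rfl)
    rw [he, S19.lint_sq_eq (volume.restrict Ω) (fun x => (seq j).1 x - (seq k).1 x)]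
    rw [← ENNReal.rpow_mul]
    norm_num
  have hdist : ∀ j k : ℕ, dist (U j) (U k)
      = ((∫⁻ x in Ω, ENNReal.ofReal (((seq j).1 x - (seq k).1 x) ^ 2)) ^ (2⁻¹:ℝ)).toReal := by
    intro j k
    have hsub : U j - U k = ((seq j).2.sub (seq k).2).toLp ((seq j).1 - (seq k).1) :=
      (MemLp.toLp_sub (seq j).2 (seq k).2).symm
    rw [dist_eq_norm, hsub, Lp.norm_toLp _ ((seq j).2.sub (seq k).2), heL j k]
  have hcauchy : CauchySeq U := by
    rw [Metric.cauchySeq_iff]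
    intro ε hε
    obtain ⟨N, hN⟩ := exists_nat_gt (8 / ε ^ 2)
    refine ⟨N, fun j hj k hk => ?_⟩
    have hLe : (∫⁻ x in Ω, ENNReal.ofReal (((seq j).1 x - (seq k).1 x) ^ 2))
        ≤ ENNReal.ofReal (8 / ((N:ℝ) + 1)) := by
      refine (hLbound j k).trans ?_
      have hmono : ∀ i : ℕ, N ≤ i →
          ENNReal.ofReal (1 / ((i:ℝ) + 1)) ≤ ENNReal.ofReal (1 / ((N:ℝ) + 1)) := by
        intro i hi
        refine ENNReal.ofReal_le_ofReal ?_
        have : ((N:ℝ) + 1) ≤ (i:ℝ) + 1 := by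
          have : (N:ℝ) ≤ i := by exact_mod_cast hi
          linarith
        exact one_div_le_one_div_of_le (by positivity) this
      calc 8 * (ENNReal.ofReal (1 / ((j:ℝ) + 1)) / 2 + ENNReal.ofReal (1 / ((k:ℝ) + 1)) / 2)
          ≤ 8 * (ENNReal.ofReal (1 / ((N:ℝ) + 1)) / 2
            + ENNReal.ofReal (1 / ((N:ℝ) + 1)) / 2) := by
            gcongr
        _ = 8 * ENNReal.ofReal (1 / ((N:ℝ) + 1)) := by rw [ENNReal.add_halves]
        _ = ENNReal.ofReal (8 / ((N:ℝ) + 1)) := by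
            rw [show (8:ℝ≥0∞) = ENNReal.ofReal (8:ℝ) by norm_num,
              ← ENNReal.ofReal_mul (by norm_num)]
            rw [mul_one_div]
    rw [hdist j k]
    have hfin : (ENNReal.ofReal (8 / ((N:ℝ) + 1)) ^ (2⁻¹:ℝ)) ≠ ⊤ :=
      (ENNReal.rpow_lt_top_of_nonneg (by norm_num) ENNReal.ofReal_ne_top).ne
    have hstep : ((∫⁻ x in Ω, ENNReal.ofReal (((seq j).1 x - (seq k).1 x) ^ 2))
        ^ (2⁻¹:ℝ)).toReal ≤ ((ENNReal.ofReal (8 / ((N:ℝ) + 1))) ^ (2⁻¹:ℝ)).toReal :=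
      ENNReal.toReal_mono hfin (ENNReal.rpow_le_rpow hLe (by norm_num))
    refine lt_of_le_of_lt hstep ?_
    rw [ENNReal.ofReal_rpow_of_nonneg (by positivity) (by norm_num),
      ENNReal.toReal_ofReal (by positivity)]
    rw [show (2⁻¹:ℝ) = 1/2 by norm_num, ← Real.sqrt_eq_rpow]
    rw [Real.sqrt_lt' hε]
    have h8 : 8 / ε ^ 2 < (N:ℝ) + 1 := hN.trans (lt_add_one _)
    rw [div_lt_iff₀ (by positivity)] at h8 ⊢
    linarith
  obtain ⟨Ulim, hUlim⟩ := cauchySeq_tendsto_of_complete hcauchy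
  have humem : MemLp (⇑Ulim) 2 (volume.restrict Ω) := Lp.memLp Ulim
  set fL := hf.toLp f with hfLdef
  -- quadratic terms via Lp norms
  have hqU : ∀ k : ℕ, (∫⁻ x in Ω, ENNReal.ofReal (((seq k).1 x - f x) ^ 2))
      = ENNReal.ofReal (‖U k - fL‖ ^ 2) := by
    intro k
    rw [← S19.qe_lp hf (U k)]
    refine lintegral_congr_ae ?_
    filter_upwards [(seq k).2.coeFn_toLp] with x hx
    rw [hUdef]
    simp only []
    rw [hx]
  have hqu : (∫⁻ x in Ω, ENNReal.ofReal ((Ulim x - f x) ^ 2))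
      = ENNReal.ofReal (‖Ulim - fL‖ ^ 2) := S19.qe_lp hf Ulim
  have hconv2 : Tendsto (fun k => ‖U k - fL‖ ^ 2) atTop (𝓝 (‖Ulim - fL‖ ^ 2)) :=
    ((hUlim.sub tendsto_const_nhds).norm).pow 2
  -- the limit is a minimiser
  have hFum : ROFfun Ω φ lam f (⇑Ulim) ≤ m := by
    refine ENNReal.le_of_forall_pos_le_add fun ε hε hmtop => ?_
    have hεr : (0:ℝ) < (ε:ℝ) := by exact_mod_cast hε
    have hsup : ROFfun Ω φ lam f (⇑Ulim) = ⨆ ξ : {ξ : Eucl n → Eucl n // TestVF Ω ξ},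
        (ENNReal.ofReal lam * (ENNReal.ofReal (∫ x in Ω, Ulim x * divg ξ.1 x)
          - ∫⁻ x in Ω, phiStar φ x ‖ξ.1 x‖)
          + (∫⁻ x in Ω, ENNReal.ofReal ((Ulim x - f x) ^ 2)) / 2) := by
      show ENNReal.ofReal lam * TVphi Ω φ (⇑Ulim) + _ = _
      rw [TVphi, ENNReal.mul_iSup, ENNReal.iSup_add]
    rw [hsup]
    refine iSup_le fun ξ => ?_
    have hdm : MemLp (divg ξ.1) 2 (volume.restrict Ω) := S19.divg_memL2 ξ.2
    set Dl := hdm.toLp (divg ξ.1) with hDl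
    have hinner : ∀ W : Lp ℝ 2 (volume.restrict Ω),
        (inner ℝ W Dl : ℝ) = ∫ x in Ω, W x * divg ξ.1 x := by
      intro W
      rw [L2.inner_def]
      refine integral_congr_ae ?_
      filter_upwards [hdm.coeFn_toLp] with x hx
      rw [RCLike.inner_apply, conj_trivial, hx, mul_comm]
    have htends : Tendsto (fun k => (inner ℝ (U k) Dl : ℝ)) atTop (𝓝 (inner ℝ Ulim Dl : ℝ)) :=
      ((continuous_id.inner continuous_const).tendsto Ulim).comp hUlim
    have hIk : ∀ k : ℕ, (inner ℝ (U k) Dl : ℝ) = ∫ x in Ω, (seq k).1 x * divg ξ.1 x := by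
      intro k
      rw [hinner (U k)]
      refine integral_congr_ae ?_
      filter_upwards [(seq k).2.coeFn_toLp] with x hx
      rw [hUdef]
      simp only []
      rw [hx]
    have hconv1 : Tendsto (fun k => ∫ x in Ω, (seq k).1 x * divg ξ.1 x) atTop
        (𝓝 (∫ x in Ω, Ulim x * divg ξ.1 x)) := by
      rw [← hinner Ulim]
      exact Filter.Tendsto.congr hIk htends
    have h1ev : ∀ᶠ k in atTop, (∫ x in Ω, Ulim x * divg ξ.1 x) - (ε:ℝ)/(3*lam)
        < ∫ x in Ω, (seq k).1 x * divg ξ.1 x :=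
      hconv1.eventually (eventually_gt_nhds (sub_lt_self _ (by positivity)))
    have h2ev : ∀ᶠ k in atTop, ‖Ulim - fL‖ ^ 2 - 2*(ε:ℝ)/3 < ‖U k - fL‖ ^ 2 :=
      hconv2.eventually (eventually_gt_nhds (sub_lt_self _ (by positivity)))
    have h3ev : ∀ᶠ k : ℕ in atTop, 1/((k:ℝ)+1) < (ε:ℝ)/3 :=
      tendsto_one_div_add_atTop_nhds_zero_nat.eventually (eventually_lt_nhds (by positivity))
    obtain ⟨k, hk⟩ := ((h1ev.and h2ev).and h3ev).exists
    obtain ⟨⟨hk1, hk2⟩, hk3⟩ := hk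
    set c := ∫⁻ x in Ω, phiStar φ x ‖ξ.1 x‖ with hcdef
    have step1 : ENNReal.ofReal (∫ x in Ω, Ulim x * divg ξ.1 x) - c ≤
        (ENNReal.ofReal (∫ x in Ω, (seq k).1 x * divg ξ.1 x) - c)
          + ENNReal.ofReal ((ε:ℝ)/(3*lam)) := by
      refine tsub_le_iff_right.2 ?_
      calc ENNReal.ofReal (∫ x in Ω, Ulim x * divg ξ.1 x)
          ≤ ENNReal.ofReal ((∫ x in Ω, (seq k).1 x * divg ξ.1 x) + (ε:ℝ)/(3*lam)) :=
            ENNReal.ofReal_le_ofReal (by linarith)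
        _ ≤ ENNReal.ofReal (∫ x in Ω, (seq k).1 x * divg ξ.1 x)
            + ENNReal.ofReal ((ε:ℝ)/(3*lam)) := ENNReal.ofReal_add_le
        _ ≤ ((ENNReal.ofReal (∫ x in Ω, (seq k).1 x * divg ξ.1 x) - c) + c)
            + ENNReal.ofReal ((ε:ℝ)/(3*lam)) := by gcongr; exact le_tsub_add
        _ = (ENNReal.ofReal (∫ x in Ω, (seq k).1 x * divg ξ.1 x) - c)
            + ENNReal.ofReal ((ε:ℝ)/(3*lam)) + c := by ring
    have step2 : (∫⁻ x in Ω, ENNReal.ofReal ((Ulim x - f x) ^ 2)) / 2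
        ≤ (∫⁻ x in Ω, ENNReal.ofReal (((seq k).1 x - f x) ^ 2)) / 2
          + ENNReal.ofReal ((ε:ℝ)/3) := by
      have hq : (∫⁻ x in Ω, ENNReal.ofReal ((Ulim x - f x) ^ 2))
          ≤ (∫⁻ x in Ω, ENNReal.ofReal (((seq k).1 x - f x) ^ 2))
            + ENNReal.ofReal (2*(ε:ℝ)/3) := by
        rw [hqu, hqU k]
        calc ENNReal.ofReal (‖Ulim - fL‖ ^ 2)
            ≤ ENNReal.ofReal (‖U k - fL‖ ^ 2 + 2*(ε:ℝ)/3) :=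
              ENNReal.ofReal_le_ofReal (by linarith)
          _ ≤ _ := ENNReal.ofReal_add_le
      calc (∫⁻ x in Ω, ENNReal.ofReal ((Ulim x - f x) ^ 2)) / 2
          ≤ ((∫⁻ x in Ω, ENNReal.ofReal (((seq k).1 x - f x) ^ 2))
            + ENNReal.ofReal (2*(ε:ℝ)/3)) / 2 := ENNReal.div_le_div_right hq 2
        _ = (∫⁻ x in Ω, ENNReal.ofReal (((seq k).1 x - f x) ^ 2)) / 2
            + ENNReal.ofReal (2*(ε:ℝ)/3) / 2 := ENNReal.add_div
        _ = _ := by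
            congr 1
            rw [show 2*(ε:ℝ)/3 = ((ε:ℝ)/3)*2 by ring, ENNReal.ofReal_mul (by positivity),
              show ENNReal.ofReal (2:ℝ) = 2 by norm_num, mul_div_assoc,
              ENNReal.div_self (by norm_num) (by norm_num), mul_one]
    have step3 : ENNReal.ofReal lam
        * (ENNReal.ofReal (∫ x in Ω, (seq k).1 x * divg ξ.1 x) - c)
        + (∫⁻ x in Ω, ENNReal.ofReal (((seq k).1 x - f x) ^ 2)) / 2
        ≤ ROFfun Ω φ lam f (seq k).1 := by
      show _ ≤ ENNReal.ofReal lam * TVphi Ω φ (seq k).1 + _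
      gcongr
      rw [TVphi]
      exact le_iSup_of_le ξ le_rfl
    have step4 : ROFfun Ω φ lam f (seq k).1 ≤ m + ENNReal.ofReal ((ε:ℝ)/3) :=
      (hseq k).trans (by gcongr)
    calc ENNReal.ofReal lam * (ENNReal.ofReal (∫ x in Ω, Ulim x * divg ξ.1 x) - c)
          + (∫⁻ x in Ω, ENNReal.ofReal ((Ulim x - f x) ^ 2)) / 2
        ≤ ENNReal.ofReal lam * ((ENNReal.ofReal (∫ x in Ω, (seq k).1 x * divg ξ.1 x) - c)
            + ENNReal.ofReal ((ε:ℝ)/(3*lam)))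
          + ((∫⁻ x in Ω, ENNReal.ofReal (((seq k).1 x - f x) ^ 2)) / 2
            + ENNReal.ofReal ((ε:ℝ)/3)) :=
          add_le_add (mul_le_mul_right step1 _) step2
      _ = (ENNReal.ofReal lam * (ENNReal.ofReal (∫ x in Ω, (seq k).1 x * divg ξ.1 x) - c)
            + (∫⁻ x in Ω, ENNReal.ofReal (((seq k).1 x - f x) ^ 2)) / 2)
          + (ENNReal.ofReal lam * ENNReal.ofReal ((ε:ℝ)/(3*lam)) + ENNReal.ofReal ((ε:ℝ)/3)) := by
          rw [mul_add]; ring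
      _ ≤ (m + ENNReal.ofReal ((ε:ℝ)/3)) + (ENNReal.ofReal ((ε:ℝ)/3) + ENNReal.ofReal ((ε:ℝ)/3)) := by
          refine add_le_add (step3.trans step4) (add_le_add ?_ le_rfl)
          rw [← ENNReal.ofReal_mul hlam.le, show lam * ((ε:ℝ)/(3*lam)) = (ε:ℝ)/3 by
            field_simp]
      _ = m + (ε:ℝ≥0∞) := by
          rw [add_assoc, ← ENNReal.ofReal_add (by positivity) (by positivity),
            ← ENNReal.ofReal_add (by positivity) (by positivity)]
          rw [show (ε:ℝ)/3 + ((ε:ℝ)/3 + (ε:ℝ)/3) = (ε:ℝ) by ring]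
          rw [ENNReal.ofReal_coe_nnreal]
  have hmin : ∀ v, MemLp v 2 (volume.restrict Ω) →
      ROFfun Ω φ lam f (⇑Ulim) ≤ ROFfun Ω φ lam f v :=
    fun v hv => hFum.trans (hm_le' ⟨v, hv⟩)
  have hFueq : ROFfun Ω φ lam f (⇑Ulim) = m := le_antisymm hFum (hm_le' ⟨_, humem⟩)
  refine ⟨⇑Ulim, humem, hmin, ?_, ?_⟩
  · -- uniqueness
    intro u' hu' hmin'
    have hFu'm : ROFfun Ω φ lam f u' = m :=
      le_antisymm ((hmin' _ humem).trans hFum) (hm_le' ⟨u', hu'⟩)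
    have hmid : MemLp (fun x => (1-(2⁻¹:ℝ)) * u' x + 2⁻¹ * Ulim x) 2 (volume.restrict Ω) :=
      (hu'.const_mul _).add (humem.const_mul _)
    set L := ∫⁻ x in Ω, ENNReal.ofReal ((u' x - Ulim x) ^ 2) with hLdef
    have hkey : m + L / 8 ≤ m := by
      calc m + L / 8
          ≤ ROFfun Ω φ lam f (fun x => (1-(2⁻¹:ℝ)) * u' x + 2⁻¹ * Ulim x) + L / 8 := by
            gcongr
            exact hm_le' ⟨_, hmid⟩
        _ ≤ ROFfun Ω φ lam f u' / 2 + ROFfun Ω φ lam f (⇑Ulim) / 2 :=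
            S19.strong_convexity Ω φ hf hu' humem
        _ = m / 2 + m / 2 := by rw [hFu'm, hFueq]
        _ = m := ENNReal.add_halves m
    have hL8 : L / 8 = 0 := by
      have := (ENNReal.add_le_add_iff_left hm_ne).mp (by rw [add_zero]; exact hkey :
        m + L / 8 ≤ m + 0)
      exact le_antisymm this zero_le
    have hL0 : L = 0 := by
      have : L = 8 * (L / 8) := (ENNReal.mul_div_cancel' (by norm_num) (by norm_num)).symm
      rw [this, hL8, mul_zero]
    have hmeas : AEMeasurable (fun x => ENNReal.ofReal ((u' x - Ulim x) ^ 2))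
        (volume.restrict Ω) :=
      ((hu'.aestronglyMeasurable.aemeasurable.sub
        humem.aestronglyMeasurable.aemeasurable).pow_const 2).ennreal_ofReal
    have hae := (lintegral_eq_zero_iff' hmeas).mp hL0
    filter_upwards [hae] with x hx
    have hx0 : (u' x - Ulim x) ^ 2 ≤ 0 := ENNReal.ofReal_eq_zero.mp hx
    have h2 : (u' x - Ulim x) ^ 2 = 0 := le_antisymm hx0 (sq_nonneg _)
    exact sub_eq_zero.mp (pow_eq_zero_iff two_ne_zero |>.mp h2)
  · -- Euler–Lagrange characterisation
    intro u' hu'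
    constructor
    · intro hmin'
      have hTfin : TVphi Ω φ u' < ⊤ := by
        by_contra htop
        have h1 : ROFfun Ω φ lam f u' = ⊤ := hFtop u' (top_le_iff.mp (not_lt.mp htop))
        have hle := hmin' _ h0m
        rw [h1] at hle
        exact absurd (hle.trans_lt hF0) (lt_irrefl ⊤)
      refine ⟨hTfin, ?_⟩
      intro v hv htv
      set I := ∫ x in Ω, (u' x - f x) * (v x - u' x) with hIdef
      set J := ∫ x in Ω, (v x - u' x) * (v x - u' x) with hJdef
      have hJ0 : 0 ≤ J := integral_nonneg fun x => mul_self_nonneg _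
      have hI2 : (∫ x in Ω, (f x - u' x) * (v x - u' x)) = -I := by
        rw [← integral_neg]
        exact integral_congr_ae (Eventually.of_forall fun x => by ring)
      have hgm : MemLp (fun x => v x - u' x) 2 (volume.restrict Ω) := hv.sub hu'
      have hstep : ∀ t : ℝ, 0 < t → t ≤ 1 →
          lam * (TVphi Ω φ u').toReal - I ≤ lam * (TVphi Ω φ v).toReal + t * (J/2) := by
        intro t ht0 ht1
        have hwm : MemLp (fun x => (1 - t) * u' x + t * v x) 2 (volume.restrict Ω) :=
          (hu'.const_mul _).add (hv.const_mul _)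
        have htvw := S19.tv_convex Ω φ hu' hv ht0.le ht1
        have htvw_fin : TVphi Ω φ (fun x => (1 - t) * u' x + t * v x) < ⊤ :=
          htvw.trans_lt (ENNReal.add_lt_top.mpr
            ⟨ENNReal.mul_lt_top ENNReal.ofReal_lt_top hTfin,
             ENNReal.mul_lt_top ENNReal.ofReal_lt_top htv⟩)
        have htwr : (TVphi Ω φ (fun x => (1 - t) * u' x + t * v x)).toReal
            ≤ (1-t) * (TVphi Ω φ u').toReal + t * (TVphi Ω φ v).toReal := by
          have hrhs : (ENNReal.ofReal (1-t) * TVphi Ω φ u'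
              + ENNReal.ofReal t * TVphi Ω φ v).toReal
              = (1-t) * (TVphi Ω φ u').toReal + t * (TVphi Ω φ v).toReal := by
            rw [ENNReal.toReal_add (ENNReal.mul_lt_top ENNReal.ofReal_lt_top hTfin).ne
              (ENNReal.mul_lt_top ENNReal.ofReal_lt_top htv).ne,
              ENNReal.toReal_mul, ENNReal.toReal_mul,
              ENNReal.toReal_ofReal (by linarith), ENNReal.toReal_ofReal ht0.le]
          rw [← hrhs]
          exact ENNReal.toReal_mono (ENNReal.add_lt_top.mpr
            ⟨ENNReal.mul_lt_top ENNReal.ofReal_lt_top hTfin,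
             ENNReal.mul_lt_top ENNReal.ofReal_lt_top htv⟩).ne htvw
        have hFle := hmin' _ hwm
        rw [hFreal u' hu' hTfin, hFreal _ hwm htvw_fin] at hFle
        have hrhs_nonneg : (0:ℝ) ≤ lam * (TVphi Ω φ (fun x => (1 - t) * u' x + t * v x)).toReal
            + (∫ x in Ω, ((1 - t) * u' x + t * v x - f x) ^ 2) / 2 :=
          add_nonneg (mul_nonneg hlam.le ENNReal.toReal_nonneg)
            (by linarith [hQr0 (fun x => (1 - t) * u' x + t * v x)])
        have hreal := (ENNReal.ofReal_le_ofReal_iff hrhs_nonneg).mp hFle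
        have hqw : (∫ x in Ω, ((1 - t) * u' x + t * v x - f x) ^ 2)
            = (∫ x in Ω, (u' x - f x) ^ 2) + 2*t*I + t^2*J := by
          have hq := S19.q_expand (μ := volume.restrict Ω) hf hu' hgm t
          rw [← hIdef, ← hJdef] at hq
          rw [← hq]
          exact integral_congr_ae (Eventually.of_forall fun x => by ring_nf)
        rw [hqw] at hreal
        have h5 : lam * (TVphi Ω φ u').toReal + (∫ x in Ω, (u' x - f x) ^ 2)/2
            ≤ lam * ((1-t) * (TVphi Ω φ u').toReal + t * (TVphi Ω φ v).toReal)
              + ((∫ x in Ω, (u' x - f x) ^ 2) + 2*t*I + t^2*J)/2 :=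
          hreal.trans (by
            have := mul_le_mul_of_nonneg_left htwr hlam.le
            linarith)
        have ht5 : 0 ≤ t * (-(lam * (TVphi Ω φ u').toReal)
            + lam * (TVphi Ω φ v).toReal + I + t*(J/2)) := by nlinarith [h5]
        have := (mul_nonneg_iff_of_pos_left ht0).mp ht5
        linarith
      rw [hI2]
      by_contra hcon
      push_neg at hcon
      set cg := lam * (TVphi Ω φ u').toReal + -I - lam * (TVphi Ω φ v).toReal with hcg
      have hc0 : 0 < cg := by rw [hcg]; linarith
      set t0 := min 1 (cg/(J+1)) with ht0def
      have ht0pos : 0 < t0 := lt_min one_pos (by positivity)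
      have ht01 : t0 ≤ 1 := min_le_left _ _
      have hs := hstep t0 ht0pos ht01
      have htJ : t0 * (J/2) < cg := by
        calc t0 * (J/2) ≤ (cg/(J+1)) * (J/2) :=
            mul_le_mul_of_nonneg_right (min_le_right _ _) (by linarith)
          _ < (cg/(J+1)) * (J+1) :=
            mul_lt_mul_of_pos_left (by linarith) (by positivity)
          _ = cg := div_mul_cancel₀ _ (by positivity)
      rw [hcg] at htJ
      linarith
    · rintro ⟨hTfin, hineq⟩ v hv
      by_cases htv : TVphi Ω φ v < ⊤
      · have hiv := hineq v hv htv
        have hgm : MemLp (fun x => v x - u' x) 2 (volume.restrict Ω) := hv.sub hu'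
        have hqv : (∫ x in Ω, (v x - f x) ^ 2)
            = (∫ x in Ω, (u' x - f x) ^ 2)
              + 2*1*(∫ x in Ω, (u' x - f x) * (v x - u' x))
              + 1^2*(∫ x in Ω, (v x - u' x) * (v x - u' x)) := by
          have hq := S19.q_expand (μ := volume.restrict Ω) hf hu' hgm 1
          rw [← hq]
          exact integral_congr_ae (Eventually.of_forall fun x => by ring_nf)
        have hI2 : (∫ x in Ω, (f x - u' x) * (v x - u' x))
            = -(∫ x in Ω, (u' x - f x) * (v x - u' x)) := by
          rw [← integral_neg]
          exact integral_congr_ae (Eventually.of_forall fun x => by ring)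
        have hJ0 : 0 ≤ ∫ x in Ω, (v x - u' x) * (v x - u' x) :=
          integral_nonneg fun x => mul_self_nonneg _
        rw [hFreal u' hu' hTfin, hFreal v hv htv]
        refine ENNReal.ofReal_le_ofReal ?_
        rw [hI2] at hiv
        rw [hqv]
        linarith
      · rw [hFtop v (top_le_iff.mp (not_lt.mp htv))]
        exact le_top

end
end
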